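/- arXiv:0707.1174 — 11 statements merged into one kernel-verified Lean document; each statement's English description precedes it below -/
import Mathlib

section
/- In a normed vector space E whose closed unit ball is strictly convex, for any two points x, y the line segment t ↦ (1−t)x + ty, t ∈ [0,1], is, up to reparametrization, the unique curve of minimal length (equal to ‖x−y‖) connecting x to y. -/
open Set

private lemma seg_sub {E : Type*} [NormedAddCommGroup E] [NormedSpace ℝ E] (x y : E) (s t : ℝ) :
    ((1 - s) • x + s • y) - ((1 - t) • x + t • y) = (t - s) • (x - y) := by
  simp only [smul_sub, sub_smul, one_smul]
  abel

/-- In a normed space with strictly convex closed unit ball, the segment from `x` to `y`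
has length `‖x - y‖`, and any continuous curve from `x` to `y` whose length (total
variation) equals `‖x - y‖` has the segment as its image; i.e. up to reparametrization
the segment is the unique minimal-length curve joining `x` and `y`. -/
theorem stmt_2 {E : Type*} [NormedAddCommGroup E] [NormedSpace ℝ E]
    [StrictConvexSpace ℝ E] (x y : E) :
    eVariationOn (fun t : ℝ => (1 - t) • x + t • y) (Icc 0 1)
      = ENNReal.ofReal ‖x - y‖ ∧
    ∀ γ : ℝ → E, ContinuousOn γ (Icc 0 1) → γ 0 = x → γ 1 = y →
      eVariationOn γ (Icc 0 1) = ENNReal.ofReal ‖x - y‖ →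
      γ '' (Icc 0 1) = segment ℝ x y := by
  set f : ℝ → E := fun t => (1 - t) • x + t • y with hf
  have hf0 : f 0 = x := by simp [hf]
  have hf1 : f 1 = y := by simp [hf]
  have hlip : LipschitzWith ‖x - y‖₊ f := by
    apply LipschitzWith.of_dist_le_mul
    intro s t
    rw [dist_eq_norm, hf, seg_sub, norm_smul, Real.dist_eq]
    rw [Real.norm_eq_abs, abs_sub_comm]
    ring_nf
    exact le_refl _
  constructor
  · apply le_antisymm
    · have h1 : eVariationOn (f ∘ id) (Icc (0:ℝ) 1) ≤ ‖x - y‖₊ * eVariationOn id (Icc (0:ℝ) 1) :=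
        (hlip.lipschitzOnWith (s := univ)).comp_eVariationOn_le (mapsTo_univ _ _)
      have h2 : eVariationOn id (Icc (0:ℝ) 1) ≤ ENNReal.ofReal ((1:ℝ) - 0) := by
        have := MonotoneOn.eVariationOn_le (f := (id : ℝ → ℝ)) (s := Icc (0:ℝ) 1)
          (monotoneOn_id) (a := 0) (b := 1) (by simp) (by simp)
        simpa using this
      calc eVariationOn f (Icc (0:ℝ) 1) = eVariationOn (f ∘ id) (Icc (0:ℝ) 1) := rfl
        _ ≤ ‖x - y‖₊ * eVariationOn id (Icc (0:ℝ) 1) := h1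
        _ ≤ ‖x - y‖₊ * ENNReal.ofReal ((1:ℝ) - 0) := by gcongr
        _ = ENNReal.ofReal ‖x - y‖ := by
            rw [sub_zero, ENNReal.ofReal_one, mul_one]; exact (ofReal_norm _).symm
    · have := eVariationOn.edist_le f (show (0:ℝ) ∈ Icc (0:ℝ) 1 by simp)
        (show (1:ℝ) ∈ Icc (0:ℝ) 1 by simp)
      rwa [hf0, hf1, edist_dist, dist_eq_norm] at this
  · intro γ hγc hγ0 hγ1 hvar
    have hmem : ∀ t ∈ Icc (0:ℝ) 1, γ t ∈ segment ℝ x y := by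
      intro t ht
      have h1 : edist (γ 0) (γ t) ≤ eVariationOn γ (Icc (0:ℝ) 1 ∩ Icc 0 t) :=
        eVariationOn.edist_le γ ⟨by simp, le_refl _, ht.1⟩ ⟨ht, ht.1, le_refl _⟩
      have h2 : edist (γ t) (γ 1) ≤ eVariationOn γ (Icc (0:ℝ) 1 ∩ Icc t 1) :=
        eVariationOn.edist_le γ ⟨ht, le_refl _, ht.2⟩ ⟨by simp, ht.2, le_refl _⟩
      have hsum : eVariationOn γ (Icc (0:ℝ) 1 ∩ Icc 0 t) +
          eVariationOn γ (Icc (0:ℝ) 1 ∩ Icc t 1) = eVariationOn γ (Icc (0:ℝ) 1) := by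
        rw [eVariationOn.Icc_add_Icc γ ht.1 ht.2 ht]
        congr 1
        simp
      have htri : edist (γ 0) (γ t) + edist (γ t) (γ 1) = edist (γ 0) (γ 1) := by
        apply le_antisymm
        · calc edist (γ 0) (γ t) + edist (γ t) (γ 1)
              ≤ eVariationOn γ (Icc (0:ℝ) 1 ∩ Icc 0 t)
                + eVariationOn γ (Icc (0:ℝ) 1 ∩ Icc t 1) := add_le_add h1 h2
            _ = eVariationOn γ (Icc (0:ℝ) 1) := hsum
            _ = ENNReal.ofReal ‖x - y‖ := hvar
            _ = edist (γ 0) (γ 1) := by rw [hγ0, hγ1, edist_dist, dist_eq_norm]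
        · exact edist_triangle _ _ _
      have hdist : dist (γ 0) (γ t) + dist (γ t) (γ 1) = dist (γ 0) (γ 1) := by
        have := congrArg ENNReal.toReal htri
        rwa [ENNReal.toReal_add (edist_ne_top _ _) (edist_ne_top _ _),
          ← dist_edist, ← dist_edist, ← dist_edist] at this
      have := dist_add_dist_eq_iff.mp hdist
      rw [hγ0, hγ1] at this
      exact mem_segment_iff_wbtw.mpr this
    apply Subset.antisymm
    · rintro _ ⟨t, ht, rfl⟩
      exact hmem t ht
    · rcases eq_or_ne x y with rfl | hxy
      · rw [segment_same]
        rintro z rfl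
        exact ⟨0, by simp, hγ0⟩
      · rintro z ⟨a, b, ha, hb, hab, rfl⟩
        -- use IVT on t ↦ ‖γ t - x‖
        have hxy' : (0:ℝ) < ‖y - x‖ := by
          rwa [norm_pos_iff, sub_ne_zero, ne_comm]
        have hcont : ContinuousOn (fun t => ‖γ t - x‖) (Icc (0:ℝ) 1) :=
          (hγc.sub continuousOn_const).norm
        have hval : b * ‖y - x‖ ∈ Icc ((fun t => ‖γ t - x‖) 0) ((fun t => ‖γ t - x‖) 1) := by
          simp only [hγ0, hγ1, sub_self, norm_zero]
          constructor
          · positivity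
          · have hb1 : b ≤ 1 := by linarith
            calc b * ‖y - x‖ ≤ 1 * ‖y - x‖ := by gcongr
              _ = ‖y - x‖ := one_mul _
        obtain ⟨t, ht, hteq⟩ := intermediate_value_Icc (by norm_num : (0:ℝ) ≤ 1) hcont hval
        have hseg := hmem t ht
        obtain ⟨c, d, hc, hd, hcd, hcdeq⟩ := hseg
        have hnorm : ‖γ t - x‖ = d * ‖y - x‖ := by
          rw [← hcdeq]
          have : c • x + d • y - x = d • (y - x) := by
            have : c = 1 - d := by linarith
            rw [this]; simp [sub_smul, smul_sub]; abel
          rw [this, norm_smul, Real.norm_eq_abs, abs_of_nonneg hd]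
        have hdb : d = b := by
          have : d * ‖y - x‖ = b * ‖y - x‖ := by rw [← hnorm]; exact hteq
          exact mul_right_cancel₀ (ne_of_gt hxy') this
        refine ⟨t, ht, ?_⟩
        rw [hcdeq.symm, hdb]
        congr 1
        · congr 1
          linarith
end

section
/- Let E be a uniformly convex Banach space and M ⊆ E a closed subset, regarded as a metric space with the induced norm distance. If for x, y ∈ M the geodesic (intrinsic) distance of x and y in M equals ‖x−y‖, then the entire segment {(1−t)x + ty : t ∈ [0,1]} is contained in M. -/
open Set

set_option maxHeartbeats 1000000 in
/-- Quantitative "thin triangle" lemma in a uniformly convex space: if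
`a + b = w`, `‖w‖ = D`, `‖a‖ = s` and `‖b‖` barely exceeds `D - s`, then
`a` is close to `(s/D) • w`. -/
lemma thin_triangle_aux {E : Type*} [NormedAddCommGroup E] [NormedSpace ℝ E]
    [UniformConvexSpace E] (D s ε : ℝ) (hD : 0 < D) (hs0 : 0 < s) (hsD : s < D)
    (hε : 0 < ε) :
    ∃ δ > 0, ∀ w a b : E, a + b = w → ‖w‖ = D → ‖a‖ = s → ‖b‖ ≤ D - s + δ →
      ‖a - (s / D) • w‖ ≤ ε := by
  set c : ℝ := min s (D - s) with hc
  have hc0 : 0 < c := lt_min hs0 (by linarith)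
  set ε₁ : ℝ := ε / (2 * (D + 1)) with hε₁def
  have hε₁ : 0 < ε₁ := by positivity
  obtain ⟨δ₁, hδ₁, H⟩ := UniformConvexSpace.uniform_convex (E := E) hε₁
  refine ⟨min (min 1 (ε / 2)) (c * δ₁ / 2), lt_min (lt_min one_pos (by positivity))
    (by positivity), ?_⟩
  set δ : ℝ := min (min 1 (ε / 2)) (c * δ₁ / 2) with hδdef
  have hδ0 : 0 < δ := lt_min (lt_min one_pos (by positivity)) (by positivity)
  have hδ1 : δ ≤ 1 := (min_le_left _ _).trans (min_le_left _ _)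
  have hδε : δ ≤ ε / 2 := (min_le_left _ _).trans (min_le_right _ _)
  have hδc : δ < c * δ₁ := (min_le_right _ _).trans_lt (half_lt_self (by positivity))
  intro w a b hab hw ha hb
  have hblow : D - s ≤ ‖b‖ := by
    have : ‖w‖ - ‖a‖ ≤ ‖b‖ := by
      have := norm_sub_norm_le w a
      have hwa : w - a = b := by rw [← hab]; abel
      rwa [hwa] at this
    linarith [hw ▸ this, ha ▸ this]
  have hb0 : 0 < ‖b‖ := by linarith
  have ha0 : a ≠ 0 := by
    intro h; rw [h, norm_zero] at ha; linarith
  have hb0' : b ≠ 0 := norm_pos_iff.mp hb0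
  obtain ⟨u, hun, hau⟩ : ∃ u : E, ‖u‖ = 1 ∧ a = s • u := by
    refine ⟨‖a‖⁻¹ • a, norm_smul_inv_norm ha0, ?_⟩
    rw [ha, smul_smul, mul_inv_cancel₀ hs0.ne', one_smul]
  obtain ⟨v, hvn, hbv⟩ : ∃ v : E, ‖v‖ = 1 ∧ b = ‖b‖ • v := by
    refine ⟨‖b‖⁻¹ • b, norm_smul_inv_norm hb0', ?_⟩
    rw [smul_smul, mul_inv_cancel₀ hb0.ne', one_smul]
  set m : ℝ := min s ‖b‖ with hm
  have hcm : c ≤ m := min_le_min le_rfl hblow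
  have hm0 : 0 < m := lt_of_lt_of_le hc0 hcm
  have hms : m ≤ s := min_le_left _ _
  have hmb : m ≤ ‖b‖ := min_le_right _ _
  -- key: ‖u + v‖ > 2 - δ₁
  have hid : a + b = m • (u + v) + ((s - m) • u + (‖b‖ - m) • v) := by
    rw [hau]; nth_rewrite 1 [hbv]; module
  have hkey : D ≤ m * ‖u + v‖ + (s - m) + (‖b‖ - m) := by
    calc D = ‖a + b‖ := by rw [hab, hw]
      _ ≤ ‖m • (u + v)‖ + ‖(s - m) • u + (‖b‖ - m) • v‖ := by
          rw [hid]; exact norm_add_le _ _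
      _ ≤ m * ‖u + v‖ + ((s - m) + (‖b‖ - m)) := by
          gcongr
          · rw [norm_smul, Real.norm_eq_abs, abs_of_pos hm0]
          · calc ‖(s - m) • u + (‖b‖ - m) • v‖ ≤ ‖(s - m) • u‖ + ‖(‖b‖ - m) • v‖ :=
                norm_add_le _ _
              _ = (s - m) + (‖b‖ - m) := by
                  rw [norm_smul, norm_smul, hun, hvn, Real.norm_eq_abs, Real.norm_eq_abs,
                    abs_of_nonneg (by linarith), abs_of_nonneg (by linarith)]
                  ring
      _ = m * ‖u + v‖ + (s - m) + (‖b‖ - m) := by ring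
  have huv : 2 - δ₁ < ‖u + v‖ := by
    have h1 : 2 * m - δ ≤ m * ‖u + v‖ := by linarith
    have h2 : m * (2 - δ₁) < m * ‖u + v‖ := by nlinarith
    exact lt_of_mul_lt_mul_left (by linarith [h2]) hm0.le
  have hclose : ‖u - v‖ < ε₁ := by
    by_contra h
    push_neg at h
    have := H hun hvn h
    linarith
  -- conclude
  have hsplit : a - (s / D) • w = (s / D) • (D • u - w) := by
    rw [smul_sub, smul_smul, div_mul_cancel₀ _ hD.ne', ← hau]
  have hwid : D • u - w = (D - s - ‖b‖) • u + ‖b‖ • (u - v) := by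
    rw [← hab, hau]; nth_rewrite 1 [hbv]; module
  have hDu : ‖D • u - w‖ ≤ δ + (D + 1) * ε₁ := by
    rw [hwid]
    calc ‖(D - s - ‖b‖) • u + ‖b‖ • (u - v)‖
        ≤ ‖(D - s - ‖b‖) • u‖ + ‖‖b‖ • (u - v)‖ := norm_add_le _ _
      _ = |D - s - ‖b‖| + ‖b‖ * ‖u - v‖ := by
          rw [norm_smul, norm_smul, hun, Real.norm_eq_abs, Real.norm_eq_abs, mul_one,
            abs_of_pos hb0]
      _ ≤ δ + (D + 1) * ε₁ := by
          gcongr ?_ + ?_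
          · rw [abs_le]; constructor <;> linarith
          · have h1 : ‖b‖ ≤ D + 1 := by linarith
            nlinarith [norm_nonneg (u - v), hclose.le, hε₁]
  calc ‖a - (s / D) • w‖ = (s / D) * ‖D • u - w‖ := by
        rw [hsplit, norm_smul, Real.norm_eq_abs, abs_of_pos (by positivity)]
    _ ≤ 1 * (δ + (D + 1) * ε₁) := by
        have h2 : s / D ≤ 1 := by rw [div_le_one hD]; linarith
        have h3 : 0 ≤ δ + (D + 1) * ε₁ := by positivity
        nlinarith [norm_nonneg (D • u - w), hDu]
    _ ≤ ε := by
        have : (D + 1) * ε₁ = ε / 2 := by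
          rw [hε₁def]; field_simp
        linarith

/-- Let `E` be a uniformly convex Banach space and `M ⊆ E` closed, regarded as a metric
space with the induced norm distance.  If the geodesic (intrinsic) distance of
`x, y ∈ M` — the infimum of lengths of continuous curves in `M` joining `x` to `y` —
equals `‖x - y‖`, then the whole segment from `x` to `y` is contained in `M`. -/
theorem stmt_3 {E : Type*} [NormedAddCommGroup E] [NormedSpace ℝ E]
    [UniformConvexSpace E] [CompleteSpace E]
    (M : Set E) (hM : IsClosed M) (x y : E) (hx : x ∈ M) (hy : y ∈ M)
    (hgeo : sInf {l : ENNReal | ∃ γ : ℝ → E, ContinuousOn γ (Icc 0 1) ∧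
        (∀ t ∈ Icc (0:ℝ) 1, γ t ∈ M) ∧ γ 0 = x ∧ γ 1 = y ∧
        l = eVariationOn γ (Icc 0 1)}
      = ENNReal.ofReal ‖x - y‖) :
    segment ℝ x y ⊆ M := by
  by_cases hxy : x = y
  · subst hxy
    rw [segment_same]
    intro z hz
    exact hz ▸ hx
  intro z hz
  rw [segment_eq_image] at hz
  obtain ⟨t, ht, rfl⟩ := hz
  rcases eq_or_lt_of_le ht.1 with ht0 | ht0
  · simp [← ht0, hx]
  rcases eq_or_lt_of_le ht.2 with ht1 | ht1
  · simp [ht1, hy]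
  set D : ℝ := ‖x - y‖ with hDdef
  have hD : 0 < D := by
    rw [hDdef, norm_pos_iff]
    exact sub_ne_zero_of_ne hxy
  set s : ℝ := t * D with hsdef
  have hs0 : 0 < s := mul_pos ht0 hD
  have hsD : s < D := by nlinarith
  set z : E := (1 - t) • x + t • y with hzdef
  have hclos : z ∈ closure M := by
    rw [Metric.mem_closure_iff]
    intro ε hε
    obtain ⟨δ, hδ0, Hδ⟩ := thin_triangle_aux (E := E) D s (ε / 2) hD hs0 hsD (by positivity)
    -- get a curve of length < D + δ
    have hlt : sInf {l : ENNReal | ∃ γ : ℝ → E, ContinuousOn γ (Icc 0 1) ∧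
        (∀ t ∈ Icc (0:ℝ) 1, γ t ∈ M) ∧ γ 0 = x ∧ γ 1 = y ∧
        l = eVariationOn γ (Icc 0 1)} < ENNReal.ofReal (D + δ) := by
      rw [hgeo]
      exact ENNReal.ofReal_lt_ofReal_iff (by linarith) |>.mpr (by linarith)
    obtain ⟨l, hlS, hl⟩ := sInf_lt_iff.mp hlt
    obtain ⟨γ, hγc, hγM, hγ0, hγ1, rfl⟩ := hlS
    -- intermediate value: find a point at arclength coordinate with ‖γ s₀ - x‖ = s
    have hfc : ContinuousOn (fun r => ‖γ r - x‖) (Icc 0 1) :=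
      (hγc.sub continuousOn_const).norm
    have hiv := intermediate_value_Icc (zero_le_one (α := ℝ)) hfc
    have hmem : s ∈ Icc ‖γ (0:ℝ) - x‖ ‖γ (1:ℝ) - x‖ := by
      rw [hγ0, hγ1, sub_self, norm_zero, ← norm_sub_rev x y]
      exact ⟨hs0.le, hsD.le⟩
    obtain ⟨s₀, hs₀, hfs₀⟩ := hiv hmem
    set p : E := γ s₀ with hp
    have hpM : p ∈ M := hγM s₀ hs₀
    -- variation splitting
    have hsplit := eVariationOn.Icc_add_Icc γ (s := Icc (0:ℝ) 1) hs₀.1 hs₀.2 hs₀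
    rw [Set.Icc_inter_Icc, Set.Icc_inter_Icc, Set.Icc_inter_Icc] at hsplit
    simp only [max_self, min_self, max_eq_left hs₀.1, min_eq_right hs₀.2,
      max_eq_right hs₀.1, min_eq_left hs₀.2] at hsplit
    have h1 : edist x p ≤ eVariationOn γ (Icc 0 s₀) := by
      have := eVariationOn.edist_le γ (s := Icc (0:ℝ) s₀) (x := (0:ℝ)) (y := s₀)
        ⟨le_rfl, hs₀.1⟩ ⟨hs₀.1, le_rfl⟩
      rwa [hγ0] at this
    have h2 : edist p y ≤ eVariationOn γ (Icc s₀ 1) := by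
      have := eVariationOn.edist_le γ (s := Icc s₀ (1:ℝ)) (x := s₀) (y := (1:ℝ))
        ⟨le_rfl, hs₀.2⟩ ⟨hs₀.2, le_rfl⟩
      rwa [hγ1] at this
    have hsum : edist x p + edist p y < ENNReal.ofReal (D + δ) :=
      lt_of_le_of_lt (le_trans (add_le_add h1 h2) (le_of_eq hsplit)) hl
    -- translate to real inequality
    have hxp : ‖p - x‖ = s := hfs₀
    have hreal : ‖x - p‖ + ‖p - y‖ < D + δ := by
      rw [edist_dist, edist_dist, dist_eq_norm, dist_eq_norm,
        ← ENNReal.ofReal_add (norm_nonneg _) (norm_nonneg _)] at hsum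
      have := (ENNReal.ofReal_lt_ofReal_iff_of_nonneg
        (by positivity)).mp hsum
      linarith
    have hby : ‖y - p‖ ≤ D - s + δ := by
      rw [norm_sub_rev]
      rw [norm_sub_rev x p, hxp] at hreal
      linarith
    -- apply thin triangle
    have hpz : ‖(p - x) - (s / D) • (y - x)‖ ≤ ε / 2 := by
      refine Hδ (y - x) (p - x) (y - p) (by abel) ?_ hxp hby
      rw [norm_sub_rev]
    have hzx : z - x = (s / D) • (y - x) := by
      rw [hzdef, hsdef, mul_div_cancel_right₀ t hD.ne']
      module
    have hdist : dist z p < ε := by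
      rw [dist_eq_norm, norm_sub_rev]
      have : p - z = (p - x) - (s / D) • (y - x) := by rw [← hzx]; abel
      rw [this]
      linarith
    exact ⟨p, hpM, hdist⟩
  rwa [hM.closure_eq] at hclos
end

section
/- A compact Riemannian manifold of dimension ≥ 1 containing two points joined by more than one minimal geodesic cannot be embedded in a uniformly convex Banach space by a map i satisfying ‖i(x) − i(y)‖ = d_M(x,y) for all x,y, where d_M is the Riemannian distance. -/
open Set

/-- A compact (geodesic) metric space — such as a compact Riemannian manifold of
dimension ≥ 1 with its Riemannian distance — containing two points joined by two
distinct (constant-speed, hence distinct up to reparametrization) minimal geodesics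
admits no map `i` into a uniformly convex Banach space with
`‖i a - i b‖ = dist a b` for all `a, b`. -/
theorem stmt_4 {M : Type*} [MetricSpace M] [CompactSpace M]
    {E : Type*} [NormedAddCommGroup E] [NormedSpace ℝ E]
    [UniformConvexSpace E] [CompleteSpace E]
    (x y : M) (γ₁ γ₂ : ℝ → M)
    (h₁0 : γ₁ 0 = x) (h₁1 : γ₁ 1 = y) (h₂0 : γ₂ 0 = x) (h₂1 : γ₂ 1 = y)
    (hg₁ : ∀ s ∈ Icc (0:ℝ) 1, ∀ t ∈ Icc (0:ℝ) 1,
      dist (γ₁ s) (γ₁ t) = |s - t| * dist x y)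
    (hg₂ : ∀ s ∈ Icc (0:ℝ) 1, ∀ t ∈ Icc (0:ℝ) 1,
      dist (γ₂ s) (γ₂ t) = |s - t| * dist x y)
    (hne : ∃ t ∈ Icc (0:ℝ) 1, γ₁ t ≠ γ₂ t) :
    ¬ ∃ i : M → E, ∀ a b : M, ‖i a - i b‖ = dist a b := by
  rintro ⟨i, hi⟩
  obtain ⟨t, ht, hnet⟩ := hne
  have hdi : ∀ a b : M, dist (i a) (i b) = dist a b := fun a b => by
    rw [dist_eq_norm, hi]
  have key : ∀ γ : ℝ → M, γ 0 = x → γ 1 = y →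
      (∀ s ∈ Icc (0:ℝ) 1, ∀ u ∈ Icc (0:ℝ) 1,
        dist (γ s) (γ u) = |s - u| * dist x y) →
      i (γ t) = AffineMap.lineMap (i x) (i y) t := by
    intro γ hγ0 hγ1 hg
    have h0 : (0:ℝ) ∈ Icc (0:ℝ) 1 := ⟨le_refl 0, zero_le_one⟩
    have h1 : (1:ℝ) ∈ Icc (0:ℝ) 1 := ⟨zero_le_one, le_refl 1⟩
    apply eq_lineMap_of_dist_eq_mul_of_dist_eq_mul
    · rw [hdi, hdi, ← hγ0]
      rw [hg 0 h0 t ht]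
      rw [abs_of_nonpos (by linarith [ht.1] : (0:ℝ) - t ≤ 0)]
      ring_nf
      simp [hγ0, hγ1]
    · rw [hdi, hdi, ← hγ1]
      rw [hg t ht 1 h1]
      rw [abs_of_nonpos (by linarith [ht.2] : t - 1 ≤ 0)]
      ring_nf
      simp [hγ0, hγ1]
  have e1 := key γ₁ h₁0 h₁1 hg₁
  have e2 := key γ₂ h₂0 h₂1 hg₂
  apply hnet
  have : dist (γ₁ t) (γ₂ t) = 0 := by
    rw [← hdi, e1, e2, dist_self]
  exact dist_eq_zero.mp this
end

section
/- Let Ω_n be a sequence of nonempty closed subsets of ℝ^N whose distance functions u_{Ω_n} converge pointwise on a dense subset D of ℝ^N to a function f. Then there exists a closed set Ω with u_Ω = f on D, and u_{Ω_n} → u_Ω uniformly on compact subsets of ℝ^N. -/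
open Set Metric

lemma aux_lip {X : Type*} [MetricSpace X] (s : Set X) (x y : X) :
    |infDist x s - infDist y s| ≤ dist x y := by
  rw [abs_sub_le_iff]
  constructor
  · have := infDist_le_infDist_add_dist (x := x) (y := y) (s := s)
    linarith
  · have := infDist_le_infDist_add_dist (x := y) (y := x) (s := s)
    rw [dist_comm] at this
    linarith

/-- If the distance functions of nonempty closed sets `Ω n ⊆ ℝ^N` converge pointwise
on a dense set `D` to a function `f`, then there is a nonempty closed set `Ω₀` whose
distance function agrees with `f` on `D`, and the distance functions converge to that
of `Ω₀` uniformly on compact sets. -/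
theorem stmt_6 {N : ℕ} (Ω : ℕ → Set (EuclideanSpace ℝ (Fin N)))
    (hcl : ∀ n, IsClosed (Ω n)) (hne : ∀ n, (Ω n).Nonempty)
    (D : Set (EuclideanSpace ℝ (Fin N))) (hD : Dense D)
    (f : EuclideanSpace ℝ (Fin N) → ℝ)
    (hconv : ∀ x ∈ D, Filter.Tendsto (fun n => infDist x (Ω n)) Filter.atTop
      (nhds (f x))) :
    ∃ Ω₀ : Set (EuclideanSpace ℝ (Fin N)), IsClosed Ω₀ ∧ Ω₀.Nonempty ∧
      (∀ x ∈ D, infDist x Ω₀ = f x) ∧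
      ∀ K : Set (EuclideanSpace ℝ (Fin N)), IsCompact K →
        TendstoUniformlyOn (fun n x => infDist x (Ω n)) (fun x => infDist x Ω₀)
          Filter.atTop K := by
  set u : ℕ → EuclideanSpace ℝ (Fin N) → ℝ := fun n x => infDist x (Ω n) with hu
  -- Cauchy at every point
  have hcauchy : ∀ x : EuclideanSpace ℝ (Fin N), CauchySeq (fun n => u n x) := by
    intro x
    rw [Metric.cauchySeq_iff]
    intro ε hε
    obtain ⟨d, hdD, hdx⟩ := hD.exists_dist_lt x (show (0:ℝ) < ε/4 by linarith)
    have hcd : CauchySeq (fun n => u n d) := (hconv d hdD).cauchySeq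
    rw [Metric.cauchySeq_iff] at hcd
    obtain ⟨M, hM⟩ := hcd (ε/4) (by linarith)
    refine ⟨M, fun m hm n hn => ?_⟩
    have h1 := aux_lip (Ω m) x d
    have h2 := aux_lip (Ω n) d x
    have h3 := hM m hm n hn
    rw [Real.dist_eq] at h3 ⊢
    have : |u m x - u n x| ≤ |u m x - u m d| + |u m d - u n d| + |u n d - u n x| := by
      have := abs_sub_le (u m x) (u m d) (u n x)
      have := abs_sub_le (u m d) (u n d) (u n x)
      linarith
    rw [dist_comm d x] at h2
    simp only [hu] at this h1 h2 ⊢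
    linarith
  have hex : ∀ x : EuclideanSpace ℝ (Fin N), ∃ l : ℝ, Filter.Tendsto (fun n => u n x) Filter.atTop (nhds l) :=
    fun x => cauchySeq_tendsto_of_complete (hcauchy x)
  choose g hg using hex
  -- g = f on D
  have hgf : ∀ x ∈ D, g x = f x := fun x hx => tendsto_nhds_unique (hg x) (hconv x hx)
  -- g is 1-Lipschitz
  have hglip : ∀ x y : EuclideanSpace ℝ (Fin N), |g x - g y| ≤ dist x y := by
    intro x y
    have : Filter.Tendsto (fun n => |u n x - u n y|) Filter.atTop (nhds (|g x - g y|)) :=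
      ((hg x).sub (hg y)).abs
    exact le_of_tendsto this (Filter.Eventually.of_forall fun n => aux_lip (Ω n) x y)
  have hgcont : Continuous g := by
    apply LipschitzWith.continuous (K := 1)
    intro x y
    rw [edist_dist, edist_dist, ENNReal.coe_one, one_mul]
    apply ENNReal.ofReal_le_ofReal
    rw [Real.dist_eq]
    exact hglip x y
  set Ω₀ : Set (EuclideanSpace ℝ (Fin N)) := {x : EuclideanSpace ℝ (Fin N) | g x = 0} with hΩ₀
  have hΩ₀cl : IsClosed Ω₀ := isClosed_eq hgcont continuous_const
  -- key: for every x there is z ∈ Ω₀ with dist x z = g x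
  have hkey : ∀ x : EuclideanSpace ℝ (Fin N), ∃ z ∈ Ω₀, dist x z = g x := by
    intro x
    choose y hy hyd using fun n => (hcl n).exists_infDist_eq_dist (hne n) x
    -- y n bounded
    have hb : ∃ C : ℝ, ∀ n, y n ∈ closedBall x C := by
      obtain ⟨C, hC⟩ := (hg x).bddAbove_range
      refine ⟨C, fun n => ?_⟩
      rw [mem_closedBall, dist_comm, ← hyd n]
      exact hC ⟨n, rfl⟩
    obtain ⟨C, hC⟩ := hb
    obtain ⟨z, -, φ, hφ, hz⟩ :=
      tendsto_subseq_of_bounded isBounded_closedBall hC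
    have hgz : g z = 0 := by
      have h1 : Filter.Tendsto (fun k => u (φ k) z) Filter.atTop (nhds (g z)) :=
        (hg z).comp hφ.tendsto_atTop
      have h2 : Filter.Tendsto (fun k => u (φ k) z) Filter.atTop (nhds 0) := by
        have hle : ∀ k, u (φ k) z ≤ dist z (y (φ k)) :=
          fun k => infDist_le_dist_of_mem (hy (φ k))
        have hge : ∀ k, (0:ℝ) ≤ u (φ k) z := fun k => infDist_nonneg
        have hd0 : Filter.Tendsto (fun k => dist z (y (φ k))) Filter.atTop (nhds 0) := by
          have := (tendsto_iff_dist_tendsto_zero.mp hz)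
          simpa [dist_comm] using this
        exact squeeze_zero hge hle hd0
      exact tendsto_nhds_unique h1 h2
    refine ⟨z, hgz, ?_⟩
    have h1 : Filter.Tendsto (fun k => dist x (y (φ k))) Filter.atTop (nhds (dist x z)) :=
      ((continuous_const.dist continuous_id).continuousAt.tendsto.comp hz)
    have h2 : Filter.Tendsto (fun k => dist x (y (φ k))) Filter.atTop (nhds (g x)) := by
      have : (fun k => dist x (y (φ k))) = fun k => u (φ k) x := by
        funext k; exact (hyd (φ k)).symm
      rw [this]
      exact (hg x).comp hφ.tendsto_atTop
    exact tendsto_nhds_unique h1 h2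
  obtain ⟨z₀, hz₀, -⟩ := hkey (0 : EuclideanSpace ℝ (Fin N))
  have hΩ₀ne : Ω₀.Nonempty := ⟨z₀, hz₀⟩
  -- infDist _ Ω₀ = g
  have hgeq : ∀ x : EuclideanSpace ℝ (Fin N), infDist x Ω₀ = g x := by
    intro x
    obtain ⟨z, hzΩ, hzd⟩ := hkey x
    refine le_antisymm (hzd ▸ infDist_le_dist_of_mem hzΩ) ?_
    by_contra hlt
    push_neg at hlt
    obtain ⟨w, hw, hwd⟩ := (infDist_lt_iff hΩ₀ne).mp hlt
    have h4 := hglip x w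
    have hw0 : g w = 0 := hw
    rw [abs_sub_le_iff] at h4
    linarith [h4.1]
  refine ⟨Ω₀, hΩ₀cl, hΩ₀ne, fun x hx => (hgeq x).trans (hgf x hx), ?_⟩
  -- uniform convergence on compacts
  intro K hK
  rw [Metric.tendstoUniformlyOn_iff]
  intro ε hε
  -- cover K with finitely many balls of radius ε/8
  have hcover : K ⊆ ⋃ x ∈ K, ball x (ε/8) := fun x hx =>
    mem_biUnion hx (mem_ball_self (by linarith))
  obtain ⟨t, htK, htfin, htcover⟩ := hK.elim_finite_subcover_image
    (fun x _ => isOpen_ball) hcover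
  -- for each center pick a nearby point of D
  choose d hdD hdd using fun (i : EuclideanSpace ℝ (Fin N)) => hD.exists_dist_lt i (show (0:ℝ) < ε/8 by linarith)
  -- eventually all centers are ε/8-approximated
  have hev : ∀ᶠ n in Filter.atTop, ∀ i ∈ t, |u n (d i) - g (d i)| < ε/8 := by
    rw [Filter.eventually_all_finite htfin]
    intro i _
    have := (hg (d i)).sub_const (g (d i))
    rw [sub_self] at this
    have habs := this.abs
    rw [abs_zero] at habs
    exact habs.eventually_lt_const (by linarith)
  filter_upwards [hev] with n hn x hx
  obtain ⟨i, hit, hxi⟩ : ∃ i ∈ t, x ∈ ball i (ε/8) := by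
    simpa using htcover hx
  have h1 : dist x (d i) < ε/4 := by
    have h2 := hdd i
    have h3 : dist x i < ε/8 := mem_ball.mp hxi
    calc dist x (d i) ≤ dist x i + dist i (d i) := dist_triangle _ _ _
      _ < ε/4 := by linarith
  have hun : |u n x - u n (d i)| ≤ dist x (d i) := aux_lip (Ω n) x (d i)
  have hgl : |g x - g (d i)| ≤ dist x (d i) := hglip x (d i)
  have hni := hn i hit
  rw [Real.dist_eq, hgeq x]
  have habc : |g x - u n x| ≤ |g x - g (d i)| + |g (d i) - u n (d i)| + |u n (d i) - u n x| := by
    have := abs_sub_le (g x) (g (d i)) (u n x)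
    have := abs_sub_le (g (d i)) (u n (d i)) (u n x)
    linarith
  have e1 : |g (d i) - u n (d i)| = |u n (d i) - g (d i)| := abs_sub_comm _ _
  have e2 : |u n (d i) - u n x| = |u n x - u n (d i)| := abs_sub_comm _ _
  simp only [hu] at habc hun hni e1 e2 ⊢
  linarith
end

section
/- The space of nonempty compact subsets of ℝ^N with the Hausdorff metric satisfies the Menger convexity property: for any nonempty compact sets A, B and any λ ∈ [0,1], there exists a nonempty compact set C with d_H(A,C) = λ·d_H(A,B) and d_H(B,C) = (1−λ)·d_H(A,B). -/
open Metric

/-- Menger convexity of the Hausdorff metric: for nonempty compact `A, B ⊆ ℝ^N` and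
`λ ∈ [0,1]` there is a nonempty compact `C` with `d_H(A,C) = λ d_H(A,B)` and
`d_H(B,C) = (1-λ) d_H(A,B)`. -/
theorem stmt_9 {N : ℕ} (A B : Set (EuclideanSpace ℝ (Fin N)))
    (hA : IsCompact A) (hB : IsCompact B) (hAne : A.Nonempty) (hBne : B.Nonempty)
    (lam : ℝ) (hlam : lam ∈ Set.Icc (0:ℝ) 1) :
    ∃ C : Set (EuclideanSpace ℝ (Fin N)), IsCompact C ∧ C.Nonempty ∧
      hausdorffDist A C = lam * hausdorffDist A B ∧
      hausdorffDist B C = (1 - lam) * hausdorffDist A B := by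
  obtain ⟨hlam0, hlam1⟩ := hlam
  set d := hausdorffDist A B with hd
  have hdnn : 0 ≤ d := hausdorffDist_nonneg
  have hne : EMetric.hausdorffEdist A B ≠ ⊤ :=
    hausdorffEdist_ne_top_of_nonempty_of_bounded hAne hBne hA.isBounded hB.isBounded
  set C := cthickening (lam * d) A ∩ cthickening ((1 - lam) * d) B with hC
  -- segment point: for a ∈ A, b ∈ B the convex combination lies in C
  have hseg : ∀ a ∈ A, ∀ b ∈ B, dist a b ≤ d →
      (AffineMap.lineMap a b lam : EuclideanSpace ℝ (Fin N)) ∈ C := by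
    intro a ha b hb hab
    constructor
    · apply mem_cthickening_of_dist_le _ a _ _ ha
      rw [dist_lineMap_left, Real.norm_eq_abs, abs_of_nonneg hlam0]
      exact mul_le_mul_of_nonneg_left hab hlam0
    · apply mem_cthickening_of_dist_le _ b _ _ hb
      rw [dist_lineMap_right, Real.norm_eq_abs, abs_of_nonneg (by linarith)]
      exact mul_le_mul_of_nonneg_left hab (by linarith)
  have hCne : C.Nonempty := by
    obtain ⟨a, ha⟩ := hAne
    obtain ⟨b, hb, hab⟩ := hB.exists_infDist_eq_dist hBne a
    have h1 : dist a b ≤ d := by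
      rw [← hab]; exact infDist_le_hausdorffDist_of_mem ha hne
    exact ⟨_, hseg a ha b hb h1⟩
  have hCc : IsCompact C :=
    (hA.cthickening).of_isClosed_subset
      ((isClosed_cthickening).inter isClosed_cthickening) Set.inter_subset_left
  have hCE : EMetric.hausdorffEdist A C ≠ ⊤ :=
    hausdorffEdist_ne_top_of_nonempty_of_bounded hAne hCne hA.isBounded hCc.isBounded
  have hCEB : EMetric.hausdorffEdist B C ≠ ⊤ :=
    hausdorffEdist_ne_top_of_nonempty_of_bounded hBne hCne hB.isBounded hCc.isBounded
  have hAC : hausdorffDist A C ≤ lam * d := by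
    apply hausdorffDist_le_of_mem_dist (by positivity)
    · intro a ha
      obtain ⟨b, hb, hab⟩ := hB.exists_infDist_eq_dist hBne a
      have h1 : dist a b ≤ d := by
        rw [← hab]; exact infDist_le_hausdorffDist_of_mem ha hne
      refine ⟨_, hseg a ha b hb h1, ?_⟩
      rw [dist_comm, dist_lineMap_left, Real.norm_eq_abs, abs_of_nonneg hlam0]
      exact mul_le_mul_of_nonneg_left h1 hlam0
    · intro c hc
      obtain ⟨a, ha, hac⟩ := hA.exists_infDist_eq_dist hAne c
      refine ⟨a, ha, ?_⟩
      rw [← hac, infDist]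
      exact ENNReal.toReal_le_of_le_ofReal (by positivity) (mem_cthickening_iff.mp hc.1)
  have hBC : hausdorffDist B C ≤ (1 - lam) * d := by
    apply hausdorffDist_le_of_mem_dist (by nlinarith)
    · intro b hb
      obtain ⟨a, ha, hab⟩ := hA.exists_infDist_eq_dist hAne b
      have h1 : dist a b ≤ d := by
        rw [dist_comm, ← hab]
        calc infDist b A ≤ hausdorffDist B A :=
              infDist_le_hausdorffDist_of_mem hb (by rw [EMetric.hausdorffEdist_comm]; exact hne)
        _ = d := hausdorffDist_comm
      refine ⟨_, hseg a ha b hb h1, ?_⟩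
      rw [dist_comm, dist_lineMap_right, Real.norm_eq_abs, abs_of_nonneg (by linarith)]
      exact mul_le_mul_of_nonneg_left h1 (by linarith)
    · intro c hc
      obtain ⟨b, hb, hbc⟩ := hB.exists_infDist_eq_dist hBne c
      refine ⟨b, hb, ?_⟩
      rw [← hbc, infDist]
      exact ENNReal.toReal_le_of_le_ofReal (by nlinarith) (mem_cthickening_iff.mp hc.2)
  have htri : d ≤ hausdorffDist A C + hausdorffDist B C := by
    calc d ≤ hausdorffDist A C + hausdorffDist C B := hausdorffDist_triangle hCE
    _ = hausdorffDist A C + hausdorffDist B C := by rw [show hausdorffDist C B = hausdorffDist B C from hausdorffDist_comm]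
  exact ⟨C, hCc, hCne, by linarith, by linarith⟩
end

section
/- For fixed λ > 0, the fattened-area map A ↦ L^N(A + D_λ) (Lebesgue measure of the λ-fattening) is continuous on the space of nonempty compact subsets of ℝ^N equipped with the Hausdorff distance. -/
open Metric Pointwise MeasureTheory TopologicalSpace Filter Set ENNReal Topology

/-- The level set of the distance function (at positive level) is Lebesgue-null. -/
theorem stmt_11_null_level {N : ℕ} {A : Set (EuclideanSpace ℝ (Fin N))} (hA : A.Nonempty)
    {lam : ℝ} (hlam : 0 < lam) :
    volume (cthickening lam A \ thickening lam A) = 0 := by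
  classical
  set S := cthickening lam A \ thickening lam A with hSdef
  by_contra hpos
  have hSm : MeasurableSet S :=
    (isClosed_cthickening.measurableSet).diff isOpen_thickening.measurableSet
  have hres : volume.restrict S ≠ 0 := by
    rw [Ne, Measure.restrict_eq_zero]
    exact hpos
  haveI : (ae (volume.restrict S)).NeBot := ae_neBot.mpr hres
  obtain ⟨x, hxT, hxS⟩ :=
    ((Besicovitch.ae_tendsto_measure_inter_div volume S).and (ae_restrict_mem hSm)).exists
  set c : ℝ≥0∞ := ENNReal.ofReal ((8 : ℝ)⁻¹ ^ N) with hc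
  have hc0 : c ≠ 0 := by
    rw [hc, Ne, ENNReal.ofReal_eq_zero, not_le]
    positivity
  have hkey : ∀ r : ℝ, 0 < r → r ≤ lam →
      volume (S ∩ closedBall x r) / volume (closedBall x r) ≤ 1 - c := by
    intro r hr hrlam
    have hxc : x ∈ cthickening lam A := hxS.1
    have hxt : x ∉ thickening lam A := hxS.2
    have hinfE : Metric.infEDist x A = ENNReal.ofReal lam := by
      refine le_antisymm hxc (not_lt.mp ?_)
      simpa [Metric.mem_thickening_iff_infEdist_lt] using hxt
    have hinf : Metric.infDist x A = lam := by
      rw [Metric.infDist, hinfE, ENNReal.toReal_ofReal hlam.le]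
    obtain ⟨a, haA, hax⟩ : ∃ a ∈ A, dist x a < lam + r / 8 := by
      rw [← Metric.infDist_lt_iff hA]
      linarith
    have hlb : lam ≤ dist x a := hinf ▸ Metric.infDist_le_dist_of_mem haA
    set u := a - x with hu_def
    have hu : ‖u‖ = dist x a := by rw [dist_comm, dist_eq_norm]
    have hupos : 0 < ‖u‖ := lt_of_lt_of_le hlam (hu ▸ hlb)
    set t : ℝ := r / (2 * ‖u‖) with ht
    have htpos : 0 < t := by positivity
    have hrle : r ≤ ‖u‖ := hrlam.trans (hu ▸ hlb)
    have htle : t ≤ 1 / 2 := by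
      rw [ht, div_le_iff₀ (by positivity)]
      linarith
    have htu : t * ‖u‖ = r / 2 := by
      rw [ht]
      field_simp
    set y := x + t • u with hy
    have hyx : y - x = t • u := by rw [hy]; abel
    have hdyx : dist y x = r / 2 := by
      rw [dist_eq_norm, hyx, norm_smul, Real.norm_eq_abs, abs_of_nonneg htpos.le, htu]
    have hay : a - y = (1 - t) • u := by
      rw [hy, sub_smul, one_smul, hu_def]
      abel
    have hdya : dist y a ≤ lam - 3 / 8 * r := by
      rw [dist_comm, dist_eq_norm, hay, norm_smul, Real.norm_eq_abs,
        abs_of_nonneg (by linarith : (0:ℝ) ≤ 1 - t), sub_mul, one_mul, htu]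
      rw [hu]
      linarith
    have hball_sub : closedBall y (r / 8) ⊆ thickening lam A := by
      intro z hz
      have h1 : dist z y ≤ r / 8 := hz
      have hza : dist z a < lam := by
        have := dist_triangle z y a
        linarith
      exact Metric.mem_thickening_iff.mpr ⟨a, haA, hza⟩
    have hdisj : S ∩ closedBall x r ⊆ closedBall x r \ closedBall y (r / 8) := by
      rintro z ⟨hzS, hzB⟩
      exact ⟨hzB, fun hzb => hzS.2 (hball_sub hzb)⟩
    have hsubB : closedBall y (r / 8) ⊆ closedBall x r := by
      apply closedBall_subset_closedBall'
      rw [hdyx]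
      linarith
    have hBfin : volume (closedBall x r) ≠ ⊤ := measure_closedBall_lt_top.ne
    have hB0 : volume (closedBall x r) ≠ 0 := (measure_closedBall_pos volume x hr).ne'
    have hmB' : volume (closedBall y (r / 8)) = c * volume (closedBall x r) := by
      rw [Measure.addHaar_closedBall volume y (by positivity : (0:ℝ) ≤ r / 8),
        Measure.addHaar_closedBall volume x hr.le, hc, finrank_euclideanSpace_fin,
        ← mul_assoc, ← ENNReal.ofReal_mul (by positivity), ← mul_pow]
      congr 2
      ring
    have hmeas_le : volume (S ∩ closedBall x r)
        ≤ volume (closedBall x r) - c * volume (closedBall x r) := by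
      calc volume (S ∩ closedBall x r)
          ≤ volume (closedBall x r \ closedBall y (r / 8)) := measure_mono hdisj
        _ = volume (closedBall x r) - volume (closedBall y (r / 8)) :=
            measure_diff hsubB measurableSet_closedBall.nullMeasurableSet
              measure_closedBall_lt_top.ne
        _ = _ := by rw [hmB']
    rw [ENNReal.div_le_iff hB0 hBfin]
    refine hmeas_le.trans (le_of_eq ?_)
    rw [ENNReal.sub_mul (fun _ _ => hBfin), one_mul]
  have hev : ∀ᶠ r in 𝓝[>] (0:ℝ),
      volume (S ∩ closedBall x r) / volume (closedBall x r) ≤ 1 - c := by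
    filter_upwards [Ioc_mem_nhdsGT_of_mem ⟨le_rfl, hlam⟩] with r hr
    exact hkey r hr.1 hr.2
  have h1 : (1 : ℝ≥0∞) ≤ 1 - c := le_of_tendsto hxT hev
  have h2 : (1 : ℝ≥0∞) - c < 1 := ENNReal.sub_lt_self one_ne_top one_ne_zero hc0
  exact absurd (h1.trans_lt h2) (lt_irrefl _)

/-- For fixed `λ > 0`, the fattened-area map `A ↦ L^N(A + D_λ)` is continuous on the
space of nonempty compact subsets of `ℝ^N` with the Hausdorff distance. -/
theorem stmt_11 {N : ℕ} (lam : ℝ) (hlam : 0 < lam) :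
    Continuous (fun A : NonemptyCompacts (EuclideanSpace ℝ (Fin N)) =>
      (volume ((A : Set (EuclideanSpace ℝ (Fin N)))
        + closedBall (0 : EuclideanSpace ℝ (Fin N)) lam)).toReal) := by
  rw [Metric.continuous_iff]
  intro A₀ ε hε
  set m : ℝ → ℝ≥0∞ := fun r => volume (cthickening r (A₀ : Set (EuclideanSpace ℝ (Fin N))))
    with hm
  have hfin : ∀ r, m r ≠ ⊤ := fun r => (A₀.isCompact.cthickening).measure_lt_top.ne
  have hmono : Monotone m := fun a b h => measure_mono (cthickening_mono h _)
  -- right-continuity at lam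
  have hR : Tendsto (fun δ : ℝ => m (lam + δ)) (𝓝[>] 0) (𝓝 (m lam)) := by
    have h0 := tendsto_measure_cthickening
      (μ := volume) (s := cthickening lam (A₀ : Set (EuclideanSpace ℝ (Fin N))))
      ⟨1, one_pos, (A₀.isCompact.cthickening.cthickening).measure_lt_top.ne⟩
    rw [isClosed_cthickening.closure_eq] at h0
    refine Tendsto.congr' ?_ (h0.mono_left nhdsWithin_le_nhds)
    filter_upwards [eventually_mem_nhdsWithin] with δ (hδ : (0:ℝ) < δ)
    rw [cthickening_cthickening hδ.le hlam.le, add_comm]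
  obtain ⟨δ₁, hδ₁pos, hδ₁⟩ :
      ∃ δ₁ : ℝ, 0 < δ₁ ∧ (m (lam + δ₁)).toReal < (m lam).toReal + ε / 2 := by
    have hT : Tendsto (fun δ : ℝ => (m (lam + δ)).toReal) (𝓝[>] 0) (𝓝 (m lam).toReal) :=
      (ENNReal.tendsto_toReal (hfin lam)).comp hR
    have := (hT.eventually_lt_const (by linarith : (m lam).toReal < (m lam).toReal + ε / 2)).and
      eventually_mem_nhdsWithin
    obtain ⟨δ₁, h1, h2⟩ := this.exists
    exact ⟨δ₁, h2, h1⟩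
  -- left-continuity at lam
  have hthick : volume (thickening lam (A₀ : Set (EuclideanSpace ℝ (Fin N)))) = m lam := by
    refine le_antisymm (measure_mono (thickening_subset_cthickening _ _)) ?_
    have : cthickening lam (A₀ : Set (EuclideanSpace ℝ (Fin N)))
        ⊆ thickening lam (A₀ : Set (EuclideanSpace ℝ (Fin N)))
          ∪ (cthickening lam (A₀ : Set (EuclideanSpace ℝ (Fin N)))
              \ thickening lam (A₀ : Set (EuclideanSpace ℝ (Fin N)))) := by
      intro z hz
      by_cases h : z ∈ thickening lam (A₀ : Set (EuclideanSpace ℝ (Fin N)))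
      · exact Or.inl h
      · exact Or.inr ⟨hz, h⟩
    refine (measure_mono this).trans ?_
    refine (measure_union_le _ _).trans ?_
    rw [stmt_11_null_level A₀.nonempty hlam, add_zero]
  obtain ⟨n, hn⟩ : ∃ n : ℕ, (m lam).toReal - ε / 2 < (m (lam - lam / (n + 1))).toReal := by
    set s : ℕ → Set (EuclideanSpace ℝ (Fin N)) :=
      fun n => cthickening (lam - lam / (n + 1)) (A₀ : Set (EuclideanSpace ℝ (Fin N))) with hs
    have hsm : Monotone s := by
      intro i j hij
      apply cthickening_mono
      have : lam / (j + 1) ≤ lam / (i + 1) := by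
        apply div_le_div_of_nonneg_left hlam.le (by positivity)
        exact_mod_cast add_le_add_left (Nat.cast_le.mpr hij) 1
      linarith
    have hUnion : (⋃ n, s n) = thickening lam (A₀ : Set (EuclideanSpace ℝ (Fin N))) := by
      apply Subset.antisymm
      · refine iUnion_subset fun n => ?_
        apply cthickening_subset_thickening' hlam
        have : 0 < lam / (n + 1) := by positivity
        linarith
      · intro z hz
        obtain ⟨a, haA, hza⟩ := Metric.mem_thickening_iff.mp hz
        have hpos2 : 0 < (lam - dist z a) / lam := by
          apply div_pos (by linarith) hlam
        obtain ⟨n, hn⟩ := exists_nat_one_div_lt hpos2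
        refine mem_iUnion.mpr ⟨n, ?_⟩
        apply mem_cthickening_of_dist_le z a _ _ haA
        have h2 : lam * (1 / (n + 1 : ℝ)) < lam * ((lam - dist z a) / lam) :=
          mul_lt_mul_of_pos_left hn hlam
        rw [mul_div_cancel₀ _ hlam.ne'] at h2
        rw [mul_one_div] at h2
        linarith
    have hL : Tendsto (fun n => volume (s n)) atTop (𝓝 (m lam)) := by
      have := tendsto_measure_iUnion_atTop (μ := volume) hsm
      rwa [hUnion, hthick] at this
    have hLT : Tendsto (fun n => (volume (s n)).toReal) atTop (𝓝 (m lam).toReal) :=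
      (ENNReal.tendsto_toReal (hfin lam)).comp hL
    exact (hLT.eventually_const_lt (by linarith : (m lam).toReal - ε / 2 < (m lam).toReal)).exists
  set δ₂ : ℝ := lam / (n + 1) with hδ₂
  have hδ₂pos : 0 < δ₂ := by positivity
  have hδ₂le : δ₂ ≤ lam := by
    rw [hδ₂, div_le_iff₀ (by positivity : (0:ℝ) < (n:ℝ) + 1)]
    nlinarith [hlam.le, (Nat.cast_nonneg n : (0:ℝ) ≤ n)]
  refine ⟨min δ₁ δ₂, lt_min hδ₁pos hδ₂pos, fun B hB => ?_⟩
  set δ : ℝ := min δ₁ δ₂ with hδ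
  have hδpos : 0 < δ := lt_min hδ₁pos hδ₂pos
  -- rewrite as cthickenings
  have key : ∀ C : NonemptyCompacts (EuclideanSpace ℝ (Fin N)),
      (C : Set (EuclideanSpace ℝ (Fin N))) + closedBall 0 lam
        = cthickening lam (C : Set (EuclideanSpace ℝ (Fin N))) :=
    fun C => C.isCompact.add_closedBall_zero hlam.le
  have hed : EMetric.hausdorffEdist (B : Set (EuclideanSpace ℝ (Fin N)))
      (A₀ : Set (EuclideanSpace ℝ (Fin N))) ≤ ENNReal.ofReal δ := by
    have h1 : edist B A₀ = EMetric.hausdorffEdist (B : Set (EuclideanSpace ℝ (Fin N)))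
        (A₀ : Set (EuclideanSpace ℝ (Fin N))) := rfl
    rw [← h1, edist_dist]
    exact ENNReal.ofReal_le_ofReal hB.le
  have hBA : (B : Set (EuclideanSpace ℝ (Fin N)))
      ⊆ cthickening δ (A₀ : Set (EuclideanSpace ℝ (Fin N))) := fun z hz =>
    mem_cthickening_iff.mpr ((EMetric.infEdist_le_hausdorffEdist_of_mem hz).trans hed)
  have hAB : (A₀ : Set (EuclideanSpace ℝ (Fin N)))
      ⊆ cthickening δ (B : Set (EuclideanSpace ℝ (Fin N))) := fun z hz =>
    mem_cthickening_iff.mpr ((EMetric.infEdist_le_hausdorffEdist_of_mem hz).trans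
      (by rw [Metric.hausdorffEDist_comm]; exact hed))
  have h1 : volume (cthickening lam (B : Set (EuclideanSpace ℝ (Fin N)))) ≤ m (lam + δ) := by
    refine measure_mono ?_
    refine (cthickening_subset_of_subset lam hBA).trans (le_of_eq ?_)
    rw [cthickening_cthickening hlam.le hδpos.le, add_comm]
  have h2 : m (lam - δ) ≤ volume (cthickening lam (B : Set (EuclideanSpace ℝ (Fin N)))) := by
    refine measure_mono ?_
    refine (cthickening_subset_of_subset (lam - δ) hAB).trans (le_of_eq ?_)
    rw [cthickening_cthickening (by linarith [min_le_right δ₁ δ₂] : 0 ≤ lam - δ) hδpos.le,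
      sub_add_cancel]
  have hBfin : volume (cthickening lam (B : Set (EuclideanSpace ℝ (Fin N)))) ≠ ⊤ :=
    (B.isCompact.cthickening).measure_lt_top.ne
  have hub : (volume (cthickening lam (B : Set (EuclideanSpace ℝ (Fin N))))).toReal
      < (m lam).toReal + ε / 2 := by
    refine lt_of_le_of_lt ?_ hδ₁
    exact ENNReal.toReal_mono (hfin _) (h1.trans (hmono (by linarith [min_le_left δ₁ δ₂])))
  have hlb : (m lam).toReal - ε / 2
      < (volume (cthickening lam (B : Set (EuclideanSpace ℝ (Fin N))))).toReal := by
    refine lt_of_lt_of_le hn ?_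
    refine ENNReal.toReal_mono hBfin ?_
    refine le_trans (hmono ?_) h2
    have := min_le_right δ₁ δ₂
    simp only [hδ₂] at *
    linarith
  simp only [key B, key A₀]
  rw [Real.dist_eq, abs_lt]
  constructor <;> [linarith; linarith]
end

section
/- Let p ∈ [1,∞) and φ:[0,∞)→(0,∞) be continuous, strictly decreasing with ∫_0^∞ t^{N−1} φ(t)^p dt < ∞. For a nonempty closed set Ω ⊆ ℝ^N, the function v_Ω = φ∘u_Ω belongs to L^p(ℝ^N) if and only if Ω is bounded. -/
open Metric MeasureTheory Set

open scoped ENNReal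

lemma polar_lintegral {E : Type*} [NormedAddCommGroup E] [NormedSpace ℝ E]
    [MeasurableSpace E] [BorelSpace E] [Nontrivial E] [FiniteDimensional ℝ E]
    (μ : Measure E) [μ.IsAddHaarMeasure] (g : ℝ → ℝ≥0∞) (hg : Measurable g) :
    ∫⁻ x, g ‖x‖ ∂μ
      = μ.toSphere univ *
        ∫⁻ y in Ioi (0 : ℝ), ENNReal.ofReal (y ^ (Module.finrank ℝ E - 1)) * g y := by
  calc ∫⁻ x, g ‖x‖ ∂μ = ∫⁻ x in ({0}ᶜ : Set E), g ‖x‖ ∂μ := by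
        rw [restrict_compl_singleton]
    _ = ∫⁻ x : ({0}ᶜ : Set E), g ‖(x : E)‖ ∂(μ.comap Subtype.val) :=
        (lintegral_subtype_comap (measurableSet_singleton _).compl (fun x => g ‖x‖)).symm
    _ = ∫⁻ z : sphere (0 : E) 1 × Ioi (0 : ℝ), g z.2
          ∂(μ.toSphere.prod (.volumeIoiPow (Module.finrank ℝ E - 1))) := by
        rw [← μ.measurePreserving_homeomorphUnitSphereProd.lintegral_comp_emb
          (Homeomorph.measurableEmbedding _)
          (fun z : sphere (0 : E) 1 × Ioi (0 : ℝ) => g z.2)]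
        simp only [homeomorphUnitSphereProd_apply_snd_coe]
    _ = μ.toSphere univ *
          ∫⁻ y : Ioi (0 : ℝ), g y ∂(Measure.volumeIoiPow (Module.finrank ℝ E - 1)) := by
        rw [lintegral_prod (fun z : sphere (0 : E) 1 × Ioi (0 : ℝ) => g z.2)
          ((hg.comp (measurable_subtype_coe.comp measurable_snd)).aemeasurable)]
        simp [lintegral_const, mul_comm]
    _ = μ.toSphere univ *
          ∫⁻ y in Ioi (0 : ℝ), ENNReal.ofReal (y ^ (Module.finrank ℝ E - 1)) * g y := by
        congr 1
        rw [Measure.volumeIoiPow, lintegral_withDensity_eq_lintegral_mul _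
          ((measurable_subtype_coe.pow_const _).ennreal_ofReal)
          (show Measurable (fun y : Ioi (0:ℝ) => g ↑y) from hg.comp measurable_subtype_coe),
          ← lintegral_subtype_comap measurableSet_Ioi
            (fun y => ENNReal.ofReal (y ^ (Module.finrank ℝ E - 1)) * g y)]
        rfl

/-- Let `p ∈ [1,∞)` and `φ : [0,∞) → (0,∞)` be continuous, strictly decreasing with
`∫_0^∞ t^(N-1) φ(t)^p dt < ∞`.  For a nonempty closed `Ω ⊆ ℝ^N`, the function
`v_Ω = φ ∘ u_Ω` is in `L^p(ℝ^N)` iff `Ω` is bounded. -/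
theorem stmt_13 {N : ℕ} (p : ℝ) (hp : 1 ≤ p) (φ : ℝ → ℝ)
    (hφpos : ∀ t : ℝ, 0 ≤ t → 0 < φ t) (hφcont : Continuous φ)
    (hφanti : StrictAntiOn φ (Ici 0))
    (hφint : IntegrableOn (fun t : ℝ => t ^ (N - 1) * φ t ^ p) (Ioi 0))
    (Ω : Set (EuclideanSpace ℝ (Fin N))) (hΩ : IsClosed Ω) (hne : Ω.Nonempty) :
    MemLp (fun x => φ (infDist x Ω)) (ENNReal.ofReal p) volume ↔
      Bornology.IsBounded Ω := by
  classical
  have hp0 : (0:ℝ) < p := lt_of_lt_of_le one_pos hp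
  set f : EuclideanSpace ℝ (Fin N) → ℝ := fun x => φ (infDist x Ω) with hf
  have hfpos : ∀ x, 0 < f x := fun x => hφpos _ infDist_nonneg
  have hfc : Continuous f := hφcont.comp (continuous_infDist_pt Ω)
  have hanti : AntitoneOn φ (Ici 0) := hφanti.antitoneOn
  have hq0 : (ENNReal.ofReal p) ≠ 0 := by
    simp only [ne_eq, ENNReal.ofReal_eq_zero, not_le]; linarith
  have hqt : (ENNReal.ofReal p) ≠ ⊤ := ENNReal.ofReal_ne_top
  have hqr : (ENNReal.ofReal p).toReal = p := ENNReal.toReal_ofReal hp0.le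
  have key : MemLp f (ENNReal.ofReal p) volume ↔
      (∫⁻ x, (ENNReal.ofReal (f x)) ^ p ∂volume) < ⊤ := by
    have hcong : (∫⁻ x, (ENNReal.ofReal (f x)) ^ p ∂volume)
        = ∫⁻ x, (‖f x‖ₑ) ^ (ENNReal.ofReal p).toReal ∂volume := by
      refine lintegral_congr fun x => ?_
      rw [Real.enorm_eq_ofReal (hfpos x).le, hqr]
    constructor
    · intro h
      rw [hcong]
      exact (eLpNorm_lt_top_iff_lintegral_rpow_enorm_lt_top hq0 hqt).1 h.2
    · intro h
      rw [hcong] at h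
      exact ⟨hfc.aestronglyMeasurable,
        (eLpNorm_lt_top_iff_lintegral_rpow_enorm_lt_top hq0 hqt).2 h⟩
  rw [key]
  constructor
  · -- finite integral → bounded
    intro hI
    by_contra hub
    set S : Set (EuclideanSpace ℝ (Fin N)) := {y | infDist y Ω ≤ 1} with hS
    have hSmeas : MeasurableSet S :=
      (isClosed_le (continuous_infDist_pt Ω) continuous_const).measurableSet
    have hSfin : volume S < ⊤ := by
      by_contra hfin
      have htop : volume S = ⊤ := by simpa [lt_top_iff_ne_top, not_not] using hfin
      have hle : ENNReal.ofReal (φ 1) ^ p * volume S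
          ≤ ∫⁻ x, (ENNReal.ofReal (f x)) ^ p ∂volume := by
        rw [← setLIntegral_const S _]
        refine le_trans (setLIntegral_mono
          ((hfc.measurable.ennreal_ofReal).pow_const _) fun x hx => ?_)
          (setLIntegral_le_lintegral _ _)
        have h1 : φ 1 ≤ f x :=
          hanti (mem_Ici.2 infDist_nonneg) (mem_Ici.2 zero_le_one) hx
        exact ENNReal.rpow_le_rpow (ENNReal.ofReal_le_ofReal h1) hp0.le
      rw [htop, ENNReal.mul_top (by
        exact (ENNReal.rpow_pos (ENNReal.ofReal_pos.2 (hφpos 1 zero_le_one))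
          ENNReal.ofReal_ne_top).ne')] at hle
      exact absurd (top_le_iff.1 hle) hI.ne
    have hclaim : ∀ n : ℕ, volume (ball (0:EuclideanSpace ℝ (Fin N)) 1)
        ≤ volume (S \ closedBall 0 n) := by
      intro n
      obtain ⟨x, hxΩ, hx⟩ : ∃ x ∈ Ω, x ∉ closedBall (0:EuclideanSpace ℝ (Fin N)) (n+1) := by
        by_contra h
        push_neg at h
        exact hub ((isBounded_closedBall).subset h)
      have hx' : (n:ℝ) + 1 < ‖x‖ := by
        simpa [mem_closedBall, dist_zero_right, not_le] using hx
      have hsub : ball x 1 ⊆ S \ closedBall 0 n := by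
        intro y hy
        rw [mem_ball] at hy
        constructor
        · exact le_trans (infDist_le_dist_of_mem hxΩ) hy.le
        · simp only [mem_closedBall, dist_zero_right, not_le]
          have h2 : ‖x‖ - ‖y‖ ≤ dist y x := by
            rw [dist_comm, dist_eq_norm]
            exact norm_sub_norm_le x y
          linarith
      calc volume (ball (0:EuclideanSpace ℝ (Fin N)) 1)
          = volume (ball x 1) := (Measure.addHaar_ball_center volume x 1).symm
        _ ≤ _ := measure_mono hsub
    have hantiS : Antitone (fun n : ℕ => S \ closedBall (0:EuclideanSpace ℝ (Fin N)) n) :=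
      fun m n hmn => diff_subset_diff_right
        (closedBall_subset_closedBall (by exact_mod_cast hmn))
    have hiInter : ⋂ n : ℕ, (S \ closedBall (0:EuclideanSpace ℝ (Fin N)) n) = ∅ := by
      ext y
      simp only [mem_iInter, mem_diff, mem_empty_iff_false, iff_false, not_forall]
      refine ⟨⌈‖y‖⌉₊, fun h => h.2 ?_⟩
      simp only [mem_closedBall, dist_zero_right]
      exact Nat.le_ceil _
    have htend := tendsto_measure_iInter_atTop
      (fun n => (hSmeas.diff measurableSet_closedBall).nullMeasurableSet)
      hantiS ⟨0, (lt_of_le_of_lt (measure_mono diff_subset) hSfin).ne⟩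
    rw [hiInter] at htend
    simp only [measure_empty] at htend
    have htend' : Filter.Tendsto (fun n : ℕ => volume (S \ closedBall (0:EuclideanSpace ℝ (Fin N)) n))
        Filter.atTop (nhds 0) := htend
    have hle0 := ge_of_tendsto htend' (Filter.Eventually.of_forall hclaim)
    exact absurd (le_antisymm hle0 zero_le)
      (measure_ball_pos volume (0:EuclideanSpace ℝ (Fin N)) one_pos).ne'
  · -- bounded → finite integral
    intro hB
    obtain ⟨R0, hR0⟩ := hB.subset_closedBall 0
    set R : ℝ := max R0 0 with hRdef
    have hR : 0 ≤ R := le_max_right _ _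
    have hΩR : Ω ⊆ closedBall 0 R :=
      hR0.trans (closedBall_subset_closedBall (le_max_left _ _))
    rcases Nat.eq_zero_or_pos N with hN | hN
    · -- N = 0 : space is a point
      subst hN
      haveI : Subsingleton (EuclideanSpace ℝ (Fin 0)) :=
        ⟨fun a b => by ext i; exact i.elim0⟩
      haveI : Finite (EuclideanSpace ℝ (Fin 0)) := Finite.of_subsingleton
      obtain ⟨y, hy⟩ := hne
      have hfz : ∀ x, f x = φ 0 := fun x => by
        have hx : x ∈ Ω := (Subsingleton.elim x y) ▸ hy
        simp [hf, infDist_zero_of_mem hx]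
      calc (∫⁻ x, (ENNReal.ofReal (f x)) ^ p ∂volume)
          = ∫⁻ _, (ENNReal.ofReal (φ 0)) ^ p ∂volume :=
            lintegral_congr fun x => by rw [hfz x]
        _ = (ENNReal.ofReal (φ 0)) ^ p * volume univ := lintegral_const _
        _ < ⊤ := ENNReal.mul_lt_top
            (ENNReal.rpow_lt_top_of_nonneg hp0.le ENNReal.ofReal_ne_top)
            isCompact_univ.measure_lt_top
    · -- N ≥ 1
      haveI : Nontrivial (EuclideanSpace ℝ (Fin N)) := by
        have : 0 < Module.finrank ℝ (EuclideanSpace ℝ (Fin N)) := by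
          rw [finrank_euclideanSpace_fin]; exact hN
        exact Module.nontrivial_of_finrank_pos this
      set g : ℝ → ℝ := fun t => φ (max (t - R) 0) with hg
      have hgc : Continuous g :=
        hφcont.comp ((continuous_id.sub continuous_const).max continuous_const)
      set G : ℝ → ℝ≥0∞ := fun t => ENNReal.ofReal (g t) ^ p with hG
      have hGm : Measurable G := (hgc.measurable.ennreal_ofReal).pow_const _
      have hpt : ∀ x : EuclideanSpace ℝ (Fin N),
          (ENNReal.ofReal (f x)) ^ p ≤ G ‖x‖ := by
        intro x
        have h1 : max (‖x‖ - R) 0 ≤ infDist x Ω := by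
          refine max_le ?_ infDist_nonneg
          by_contra hlt
          push_neg at hlt
          obtain ⟨y, hyΩ, hy⟩ := (infDist_lt_iff hne).1 hlt
          have hyR : ‖y‖ ≤ R := by
            simpa [mem_closedBall, dist_zero_right] using hΩR hyΩ
          have h2 : ‖x‖ - ‖y‖ ≤ dist x y := by
            rw [dist_eq_norm]; exact norm_sub_norm_le x y
          linarith
        have h2 : f x ≤ g ‖x‖ :=
          hanti (mem_Ici.2 (le_max_right _ _)) (mem_Ici.2 infDist_nonneg) h1
        exact ENNReal.rpow_le_rpow (ENNReal.ofReal_le_ofReal h2) hp0.le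
      refine lt_of_le_of_lt (lintegral_mono fun x => hpt x) ?_
      rw [polar_lintegral volume G hGm]
      simp only [finrank_euclideanSpace_fin]
      refine ENNReal.mul_lt_top (measure_lt_top _ _) ?_
      have hsplit : Ioi (0:ℝ) = Ioc 0 (R+1) ∪ Ioi (R+1) :=
        (Ioc_union_Ioi_eq_Ioi (by linarith)).symm
      rw [hsplit]
      refine lt_of_le_of_lt (lintegral_union_le _ _ _) (ENNReal.add_lt_top.2 ⟨?_, ?_⟩)
      · -- bounded part
        have hC : ∀ y ∈ Ioc (0:ℝ) (R+1), ENNReal.ofReal (y ^ (N-1)) * G y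
            ≤ ENNReal.ofReal ((R+1)^(N-1)) * (ENNReal.ofReal (φ 0)) ^ p :=
          fun y hy => mul_le_mul'
            (ENNReal.ofReal_le_ofReal (pow_le_pow_left₀ hy.1.le hy.2 _))
            (ENNReal.rpow_le_rpow (ENNReal.ofReal_le_ofReal
              (hanti self_mem_Ici (mem_Ici.2 (le_max_right _ _)) (le_max_right _ _)))
              hp0.le)
        refine lt_of_le_of_lt (setLIntegral_mono measurable_const hC) ?_
        rw [setLIntegral_const]
        exact ENNReal.mul_lt_top
          (ENNReal.mul_lt_top ENNReal.ofReal_lt_top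
            (ENNReal.rpow_lt_top_of_nonneg hp0.le ENNReal.ofReal_ne_top))
          measure_Ioc_lt_top
      · -- tail part
        have hKmeas : Measurable (fun t : ℝ => ENNReal.ofReal (t ^ (N-1) * φ t ^ p)) :=
          ((measurable_id.pow_const _).mul
            (hφcont.measurable.pow_const _)).ennreal_ofReal
        have hbd : ∀ y ∈ Ioi (R+1),
            ENNReal.ofReal (y ^ (N-1)) * G y
              ≤ ENNReal.ofReal ((1+R)^(N-1))
                * ENNReal.ofReal ((y - R) ^ (N-1) * φ (y - R) ^ p) := by
          intro y hy
          have hy' : R + 1 < y := hy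
          have hmax : max (y - R) 0 = y - R := max_eq_left (by linarith)
          have hyR : (0:ℝ) < y - R := by linarith
          have h2 : y ^ (N-1) ≤ ((1+R) * (y-R)) ^ (N-1) := by
            refine pow_le_pow_left₀ (by linarith) ?_ _
            nlinarith
          have hGy : G y = ENNReal.ofReal (φ (y - R) ^ p) := by
            rw [hG]
            simp only [hg, hmax]
            rw [ENNReal.ofReal_rpow_of_nonneg (hφpos _ hyR.le).le hp0.le]
          calc ENNReal.ofReal (y ^ (N-1)) * G y
              ≤ ENNReal.ofReal (((1+R) * (y-R)) ^ (N-1)) * G y :=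
                mul_le_mul_left (ENNReal.ofReal_le_ofReal h2) _
            _ = ENNReal.ofReal ((1+R)^(N-1))
                * ENNReal.ofReal ((y - R) ^ (N-1) * φ (y - R) ^ p) := by
                rw [hGy, mul_pow, ENNReal.ofReal_mul (by positivity), mul_assoc,
                  ← ENNReal.ofReal_mul (by positivity)]
        have hKc : Measurable fun y : ℝ =>
            ENNReal.ofReal ((y - R) ^ (N-1) * φ (y - R) ^ p) :=
          hKmeas.comp (measurable_id.sub_const R)
        refine lt_of_le_of_lt (setLIntegral_mono
          (measurable_const.mul hKc) hbd) ?_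
        simp only [Pi.mul_apply]
        rw [lintegral_const_mul _ hKc]
        refine ENNReal.mul_lt_top ENNReal.ofReal_lt_top ?_
        have htrans := (measurePreserving_add_right volume (-R)).setLIntegral_comp_emb
          (MeasurableEquiv.addRight (-R)).measurableEmbedding
          (fun t => ENNReal.ofReal (t ^ (N-1) * φ t ^ p)) (Ioi (R+1))
        have himg : (fun x : ℝ => x + (-R)) '' Ioi (R+1) = Ioi 1 := by
          rw [image_add_const_Ioi]; ring_nf
        have hEq : ∫⁻ y in Ioi (R+1),
            ENNReal.ofReal ((y - R) ^ (N-1) * φ (y - R) ^ p) ∂volume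
            = ∫⁻ t in Ioi (1:ℝ), ENNReal.ofReal (t ^ (N-1) * φ t ^ p) ∂volume := by
          rw [← himg, ← htrans]
          refine setLIntegral_congr_fun measurableSet_Ioi
            (fun y _ => ?_)
          rw [sub_eq_add_neg]
        rw [hEq]
        refine lt_of_le_of_lt (lintegral_mono_set (Ioi_subset_Ioi zero_le_one)) ?_
        refine lt_of_le_of_lt (lintegral_mono fun t => Real.ofReal_le_enorm _) ?_
        exact hφint.2
end

section
/- With φ as above and d(A,B) = ‖φ∘u_A − φ∘u_B‖_{L^p}, for any two nonempty compact sets Ω_1, Ω_2 one has the strict inequality d(Ω_1,Ω_2) < ‖φ∘u_{Ω_1}‖_{L^p} + ‖φ∘u_{Ω_2}‖_{L^p}. -/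
open Metric MeasureTheory Set
open scoped ENNReal NNReal

private lemma aux_lintegral_lt_top {N : ℕ} (p : ℝ) (hp : 1 ≤ p) (φ : ℝ → ℝ)
    (hφpos : ∀ t : ℝ, 0 ≤ t → 0 < φ t) (hφcont : Continuous φ)
    (hφanti : StrictAntiOn φ (Ici 0))
    (hφint : IntegrableOn (fun t : ℝ => t ^ (N - 1) * φ t ^ p) (Ioi 0))
    (Ω : Set (EuclideanSpace ℝ (Fin N))) (h : IsCompact Ω) (hne : Ω.Nonempty) :
    ∫⁻ x, (‖φ (infDist x Ω)‖₊ : ℝ≥0∞) ^ p ∂(volume : Measure (EuclideanSpace ℝ (Fin N))) < ⊤ := by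
  have hp0 : 0 < p := lt_of_lt_of_le one_pos hp
  have hφanti' := hφanti.antitoneOn
  -- pointwise rewriting of the integrand
  have hpt : ∀ x : EuclideanSpace ℝ (Fin N),
      (‖φ (infDist x Ω)‖₊ : ℝ≥0∞) ^ p = ENNReal.ofReal (φ (infDist x Ω) ^ p) := by
    intro x
    have h1 : 0 < φ (infDist x Ω) := hφpos _ infDist_nonneg
    rw [← enorm_eq_nnnorm, Real.enorm_eq_ofReal h1.le, ENNReal.ofReal_rpow_of_pos h1]
  rcases Nat.eq_zero_or_pos N with hN | hN
  · -- trivial case : the space is a single point, finite measure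
    subst hN
    have hb : ∀ x : EuclideanSpace ℝ (Fin 0),
        (‖φ (infDist x Ω)‖₊ : ℝ≥0∞) ^ p ≤ ENNReal.ofReal (φ 0 ^ p) := by
      intro x
      rw [hpt x]
      apply ENNReal.ofReal_le_ofReal
      exact Real.rpow_le_rpow (hφpos _ infDist_nonneg).le
        (hφanti' self_mem_Ici infDist_nonneg infDist_nonneg) hp0.le
    calc ∫⁻ x, (‖φ (infDist x Ω)‖₊ : ℝ≥0∞) ^ p ∂(volume : Measure (EuclideanSpace ℝ (Fin 0)))
        ≤ ∫⁻ _x, ENNReal.ofReal (φ 0 ^ p) ∂(volume : Measure (EuclideanSpace ℝ (Fin 0))) :=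
          lintegral_mono hb
      _ = ENNReal.ofReal (φ 0 ^ p) * volume (univ : Set (EuclideanSpace ℝ (Fin 0))) :=
          lintegral_const _
      _ < ⊤ := by
          apply ENNReal.mul_lt_top ENNReal.ofReal_lt_top
          have hsub : (univ : Set (EuclideanSpace ℝ (Fin 0))) ⊆ closedBall 0 1 := by
            intro x _
            have : x = 0 := Subsingleton.elim x 0
            simp [this]
          exact lt_of_le_of_lt (measure_mono hsub) measure_closedBall_lt_top
  · -- main case `N ≥ 1`
    haveI : Nonempty (Fin N) := ⟨⟨0, hN⟩⟩
    haveI : Nontrivial (EuclideanSpace ℝ (Fin N)) := inferInstance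
    have hmp :=
      (volume : Measure (EuclideanSpace ℝ (Fin N))).measurePreserving_homeomorphUnitSphereProd
    rw [finrank_euclideanSpace_fin] at hmp
    obtain ⟨R, hR0, hRΩ⟩ := h.isBounded.subset_closedBall_lt 0 0
    set G : ℝ → ℝ := fun r => φ (max (r - R) 0) ^ p with hGdef
    have hGpos : ∀ r : ℝ, 0 < φ (max (r - R) 0) := fun r => hφpos _ (le_max_right _ _)
    have hGcont : Continuous G := by
      apply Continuous.rpow_const
        (hφcont.comp ((continuous_id.sub continuous_const).max continuous_const))
      intro r; exact Or.inl (hGpos r).ne'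
    have hGnonneg : ∀ r : ℝ, 0 ≤ G r := fun r => Real.rpow_nonneg (hGpos r).le p
    have hGm : Measurable fun z : sphere (0 : EuclideanSpace ℝ (Fin N)) 1 × Ioi (0:ℝ) =>
        ENNReal.ofReal (G z.2) :=
      ENNReal.measurable_ofReal.comp
        (hGcont.measurable.comp (measurable_subtype_coe.comp measurable_snd))
    -- pointwise bound by a radial function
    have hbd : ∀ x : EuclideanSpace ℝ (Fin N),
        (‖φ (infDist x Ω)‖₊ : ℝ≥0∞) ^ p ≤ ENNReal.ofReal (G ‖x‖) := by
      intro x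
      rw [hpt x]
      apply ENNReal.ofReal_le_ofReal
      apply Real.rpow_le_rpow (hφpos _ infDist_nonneg).le _ hp0.le
      apply hφanti' (mem_Ici.2 (le_max_right _ _)) infDist_nonneg
      apply max_le _ infDist_nonneg
      by_contra hc
      push_neg at hc
      obtain ⟨y, hy, hlt⟩ := (infDist_lt_iff hne).1 hc
      have h1 : ‖y‖ ≤ R := by
        have := hRΩ hy; rwa [mem_closedBall, dist_zero_right] at this
      have h2 : ‖x‖ - ‖y‖ ≤ dist x y := by
        rw [dist_eq_norm]; exact norm_sub_norm_le x y
      linarith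
    -- polar coordinates
    have key : ∫⁻ x, ENNReal.ofReal (G ‖x‖) ∂(volume : Measure (EuclideanSpace ℝ (Fin N)))
        = (∫⁻ r : Ioi (0:ℝ), ENNReal.ofReal (G r) ∂(Measure.volumeIoiPow (N - 1)))
          * (volume : Measure (EuclideanSpace ℝ (Fin N))).toSphere univ := by
      calc ∫⁻ x, ENNReal.ofReal (G ‖x‖) ∂(volume : Measure (EuclideanSpace ℝ (Fin N)))
          = ∫⁻ x : ({0}ᶜ : Set (EuclideanSpace ℝ (Fin N))), ENNReal.ofReal (G ‖x.1‖)
              ∂(Measure.comap Subtype.val volume) := by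
            rw [lintegral_subtype_comap (measurableSet_singleton 0).compl
              (fun y => ENNReal.ofReal (G ‖y‖)), MeasureTheory.restrict_compl_singleton]
        _ = ∫⁻ z : sphere (0 : EuclideanSpace ℝ (Fin N)) 1 × Ioi (0:ℝ), ENNReal.ofReal (G z.2)
              ∂((volume : Measure (EuclideanSpace ℝ (Fin N))).toSphere.prod
                (Measure.volumeIoiPow (N - 1))) := by simpa using hmp.lintegral_comp hGm
        _ = _ := by
            rw [lintegral_prod _ hGm.aemeasurable]
            simp [lintegral_const]
    -- the 1D density measure integral
    have key2 : (∫⁻ r : Ioi (0:ℝ), ENNReal.ofReal (G r) ∂(Measure.volumeIoiPow (N - 1)))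
        = ∫⁻ r in Ioi (0:ℝ), ENNReal.ofReal (r ^ (N - 1)) * ENNReal.ofReal (G r) := by
      have hg1 : Measurable fun r : Ioi (0:ℝ) => ENNReal.ofReal (G r.1) := by
        exact ENNReal.measurable_ofReal.comp (hGcont.measurable.comp measurable_subtype_coe)
      have hf1 : Measurable fun r : Ioi (0:ℝ) => ENNReal.ofReal (r.1 ^ (N - 1)) := by
        exact (measurable_subtype_coe.pow_const _).ennreal_ofReal
      rw [Measure.volumeIoiPow, lintegral_withDensity_eq_lintegral_mul _ hf1 hg1]
      simp only [Pi.mul_apply]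
      rw [lintegral_subtype_comap measurableSet_Ioi
        (fun r : ℝ => ENNReal.ofReal (r ^ (N - 1)) * ENNReal.ofReal (G r))]
    -- integrability of the 1D radial profile
    have hH : IntegrableOn (fun r : ℝ => r ^ (N - 1) * G r) (Ioi (0:ℝ)) := by
      have hHcont : Continuous fun r : ℝ => r ^ (N - 1) * G r :=
        (continuous_pow (N - 1)).mul hGcont
      have hsplit : Ioi (0:ℝ) = Ioc (0:ℝ) (2 * R) ∪ Ioi (2 * R) :=
        (Ioc_union_Ioi_eq_Ioi (by linarith)).symm
      rw [hsplit]
      apply IntegrableOn.union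
      · exact hHcont.integrableOn_Ioc
      · -- dominate by `2^(N-1) * K (r/2)` where `K` is the integrable profile
        have hKint : IntegrableOn (fun r : ℝ => (2:ℝ) ^ (N - 1) *
            (((1:ℝ)/2 * r) ^ (N - 1) * φ ((1:ℝ)/2 * r) ^ p)) (Ioi (2 * R)) := by
          apply Integrable.const_mul
          have := (integrableOn_Ioi_comp_mul_left_iff
            (fun t : ℝ => t ^ (N - 1) * φ t ^ p) (2 * R) (by norm_num : (0:ℝ) < 1/2)).2
            (hφint.mono_set (Ioi_subset_Ioi (by linarith)))
          simpa [IntegrableOn] using this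
        apply Integrable.mono' hKint hHcont.aestronglyMeasurable
        filter_upwards [ae_restrict_mem measurableSet_Ioi] with r hr
        have hr2 : 2 * R < r := hr
        have hr0 : 0 < r := by linarith
        have hrR : R ≤ r / 2 := by linarith
        have hmax : max (r - R) 0 = r - R := max_eq_left (by linarith)
        have hφle : φ (r - R) ≤ φ (r / 2) := by
          apply hφanti' (by simp [mem_Ici]; linarith) (by simp [mem_Ici]; linarith) (by linarith)
        have hHnn : 0 ≤ r ^ (N - 1) * G r :=
          mul_nonneg (pow_nonneg hr0.le _) (hGnonneg r)
        rw [Real.norm_eq_abs, abs_of_nonneg hHnn]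
        have h12 : (1:ℝ)/2 * r = r / 2 := by ring
        rw [hGdef]
        simp only [hmax, h12]
        have hpow : r ^ (N - 1) = (2:ℝ) ^ (N - 1) * (r / 2) ^ (N - 1) := by
          rw [← mul_pow]; ring_nf
        rw [hpow]
        have hφp : φ (r - R) ^ p ≤ φ (r / 2) ^ p :=
          Real.rpow_le_rpow (hφpos _ (by linarith)).le hφle hp0.le
        have h2pos : (0:ℝ) ≤ (2:ℝ) ^ (N - 1) := by positivity
        have hbase : (0:ℝ) ≤ (r / 2) ^ (N - 1) := by positivity
        calc (2:ℝ) ^ (N - 1) * (r / 2) ^ (N - 1) * (φ (r - R) ^ p)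
            ≤ (2:ℝ) ^ (N - 1) * (r / 2) ^ (N - 1) * (φ (r / 2) ^ p) := by
              apply mul_le_mul_of_nonneg_left hφp (by positivity)
          _ = (2:ℝ) ^ (N - 1) * ((r / 2) ^ (N - 1) * φ (r / 2) ^ p) := by ring
    -- put everything together
    calc ∫⁻ x, (‖φ (infDist x Ω)‖₊ : ℝ≥0∞) ^ p ∂(volume : Measure (EuclideanSpace ℝ (Fin N)))
        ≤ ∫⁻ x, ENNReal.ofReal (G ‖x‖) ∂(volume : Measure (EuclideanSpace ℝ (Fin N))) :=
          lintegral_mono hbd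
      _ = (∫⁻ r : Ioi (0:ℝ), ENNReal.ofReal (G r) ∂(Measure.volumeIoiPow (N - 1)))
            * (volume : Measure (EuclideanSpace ℝ (Fin N))).toSphere univ := key
      _ < ⊤ := by
          apply ENNReal.mul_lt_top _ (measure_lt_top _ _)
          rw [key2]
          have hle : ∫⁻ r in Ioi (0:ℝ), ENNReal.ofReal (r ^ (N - 1)) * ENNReal.ofReal (G r)
              ≤ ∫⁻ r in Ioi (0:ℝ), (‖r ^ (N - 1) * G r‖₊ : ℝ≥0∞) := by
            apply lintegral_mono_ae
            filter_upwards [ae_restrict_mem measurableSet_Ioi] with r hr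
            have hr0 : (0:ℝ) < r := hr
            rw [← enorm_eq_nnnorm, Real.enorm_eq_ofReal_abs, ← ENNReal.ofReal_mul (by positivity)]
            exact ENNReal.ofReal_le_ofReal (le_abs_self _)
          exact lt_of_le_of_lt hle hH.2

/-- With `d(A,B) = ‖φ∘u_A − φ∘u_B‖_{L^p}`, for any two nonempty compact sets
`Ω₁, Ω₂ ⊆ ℝ^N` one has the strict inequality
`d(Ω₁,Ω₂) < ‖φ∘u_{Ω₁}‖_{L^p} + ‖φ∘u_{Ω₂}‖_{L^p}`. -/
theorem stmt_14 {N : ℕ} (p : ℝ) (hp : 1 ≤ p) (φ : ℝ → ℝ)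
    (hφpos : ∀ t : ℝ, 0 ≤ t → 0 < φ t) (hφcont : Continuous φ)
    (hφanti : StrictAntiOn φ (Ici 0))
    (hφint : IntegrableOn (fun t : ℝ => t ^ (N - 1) * φ t ^ p) (Ioi 0))
    (Ω₁ Ω₂ : Set (EuclideanSpace ℝ (Fin N)))
    (h₁ : IsCompact Ω₁) (h₂ : IsCompact Ω₂) (hne₁ : Ω₁.Nonempty) (hne₂ : Ω₂.Nonempty) :
    eLpNorm (fun x => φ (infDist x Ω₁) - φ (infDist x Ω₂)) (ENNReal.ofReal p) volume
      < eLpNorm (fun x => φ (infDist x Ω₁)) (ENNReal.ofReal p) volume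
        + eLpNorm (fun x => φ (infDist x Ω₂)) (ENNReal.ofReal p) volume := by
  have hp0 : 0 < p := lt_of_lt_of_le one_pos hp
  set q : ℝ≥0∞ := ENNReal.ofReal p with hq
  have hq0 : q ≠ 0 := by simp [hq, ENNReal.ofReal_eq_zero]; linarith
  have hqtop : q ≠ ⊤ := ENNReal.ofReal_ne_top
  have hq1 : 1 ≤ q := by
    rw [hq, ← ENNReal.ofReal_one]; exact ENNReal.ofReal_le_ofReal hp
  have hqr : q.toReal = p := ENNReal.toReal_ofReal hp0.le
  set f : EuclideanSpace ℝ (Fin N) → ℝ := fun x => φ (infDist x Ω₁) with hfdef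
  set g : EuclideanSpace ℝ (Fin N) → ℝ := fun x => φ (infDist x Ω₂) with hgdef
  set m : EuclideanSpace ℝ (Fin N) → ℝ := fun x => min (f x) (g x) with hmdef
  have hfc : Continuous f := hφcont.comp (continuous_infDist_pt Ω₁)
  have hgc : Continuous g := hφcont.comp (continuous_infDist_pt Ω₂)
  have hmc : Continuous m := hfc.min hgc
  have hfpos : ∀ x, 0 < f x := fun x => hφpos _ infDist_nonneg
  have hgpos : ∀ x, 0 < g x := fun x => hφpos _ infDist_nonneg
  have hmpos : ∀ x, 0 < m x := fun x => lt_min (hfpos x) (hgpos x)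
  have hmf : ∀ x, m x ≤ f x := fun x => min_le_left _ _
  have hmg : ∀ x, m x ≤ g x := fun x => min_le_right _ _
  -- finiteness of the two lintegrals
  have hfint := aux_lintegral_lt_top p hp φ hφpos hφcont hφanti hφint Ω₁ h₁ hne₁
  have hgint := aux_lintegral_lt_top p hp φ hφpos hφcont hφanti hφint Ω₂ h₂ hne₂
  have hfLp : eLpNorm f q volume < ⊤ := by
    rw [eLpNorm_eq_lintegral_rpow_enorm_toReal hq0 hqtop, hqr]
    exact ENNReal.rpow_lt_top_of_nonneg (by positivity) hfint.ne
  have hgLp : eLpNorm g q volume < ⊤ := by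
    rw [eLpNorm_eq_lintegral_rpow_enorm_toReal hq0 hqtop, hqr]
    exact ENNReal.rpow_lt_top_of_nonneg (by positivity) hgint.ne
  -- the measure is nonzero
  have hvol : (volume : Measure (EuclideanSpace ℝ (Fin N))) ≠ 0 := by
    intro h0
    have := measure_ball_pos (volume : Measure (EuclideanSpace ℝ (Fin N))) (0 : _) one_pos
    rw [h0] at this
    simp at this
  -- strict inequality for the first term
  have hstrict : eLpNorm (fun x => f x - m x) q volume < eLpNorm f q volume := by
    rw [eLpNorm_eq_lintegral_rpow_enorm_toReal hq0 hqtop, eLpNorm_eq_lintegral_rpow_enorm_toReal hq0 hqtop,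
      hqr]
    apply ENNReal.rpow_lt_rpow _ (by positivity)
    apply lintegral_strict_mono hvol
      ((hfc.measurable.nnnorm.coe_nnreal_ennreal.pow_const p).aemeasurable)
      (ne_top_of_le_ne_top hfint.ne (lintegral_mono fun x => ?_))
    · apply Filter.Eventually.of_forall
      intro x
      have h1 : 0 ≤ f x - m x := sub_nonneg.2 (hmf x)
      have h2 : f x - m x < f x := sub_lt_self _ (hmpos x)
      rw [Real.enorm_eq_ofReal h1, ← enorm_eq_nnnorm, Real.enorm_eq_ofReal (hfpos x).le]
      exact ENNReal.rpow_lt_rpow ((ENNReal.ofReal_lt_ofReal_iff (hfpos x)).2 h2) hp0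
    · -- monotone bound used for finiteness of the smaller integral
      have h1 : 0 ≤ f x - m x := sub_nonneg.2 (hmf x)
      have h2 : f x - m x ≤ f x := by nlinarith [hmpos x]
      apply ENNReal.rpow_le_rpow _ hp0.le
      rw [Real.enorm_eq_ofReal h1, ← enorm_eq_nnnorm, Real.enorm_eq_ofReal (hfpos x).le]
      exact ENNReal.ofReal_le_ofReal h2
  -- weak inequality for the second term
  have hweak : eLpNorm (fun x => g x - m x) q volume ≤ eLpNorm g q volume := by
    apply eLpNorm_mono
    intro x
    rw [Real.norm_eq_abs, Real.norm_eq_abs, abs_of_nonneg (sub_nonneg.2 (hmg x)),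
      abs_of_nonneg (hgpos x).le]
    nlinarith [hmpos x]
  -- triangle inequality after removing the common part
  have hdecomp : (fun x => f x - g x)
      = (fun x => f x - m x) - (fun x => g x - m x) := by
    funext x; simp only [Pi.sub_apply]; ring
  calc eLpNorm (fun x => f x - g x) q volume
      = eLpNorm ((fun x => f x - m x) - (fun x => g x - m x)) q volume := by rw [hdecomp]
    _ ≤ eLpNorm (fun x => f x - m x) q volume + eLpNorm (fun x => g x - m x) q volume :=
        eLpNorm_sub_le ((hfc.sub hmc).aestronglyMeasurable) ((hgc.sub hmc).aestronglyMeasurable) hq1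
    _ ≤ eLpNorm (fun x => f x - m x) q volume + eLpNorm g q volume := by
        exact add_le_add_right hweak _
    _ < eLpNorm f q volume + eLpNorm g q volume :=
        ENNReal.add_lt_add_right hgLp.ne hstrict
end

section
/- Local equiboundedness: there is a continuous increasing function b:[0,∞)→[0,∞) with b(0)=0 such that for all nonempty compact sets Ω, Ω' ⊆ ℝ^N, if ‖φ∘u_Ω − φ∘u_{Ω'}‖_{L^p} < b(r) then Ω' ⊆ Ω + D_r. In particular, b(r)^p = N ω_N ∫_0^{r/2} t^{N−1} (φ(t) − φ(r−t))^p dt works. -/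
open Metric MeasureTheory Set Pointwise

/-- Local equiboundedness: there is a continuous, (strictly) increasing `b` with
`b 0 = 0` and `b(r)^p = N ω_N ∫_0^{r/2} t^{N-1} (φ(t) - φ(r-t))^p dt`, such that for
nonempty compact `Ω, Ω' ⊆ ℝ^N`, if `‖φ∘u_Ω − φ∘u_{Ω'}‖_{L^p} < b(r)` then
`Ω' ⊆ Ω + D_r`. -/
theorem stmt_17 {N : ℕ} (hN : 1 ≤ N) (p : ℝ) (hp : 1 ≤ p) (φ : ℝ → ℝ)
    (hφpos : ∀ t : ℝ, 0 ≤ t → 0 < φ t) (hφcont : Continuous φ)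
    (hφanti : StrictAntiOn φ (Ici 0))
    (hφLp : MemLp (fun x : EuclideanSpace ℝ (Fin N) => φ ‖x‖) (ENNReal.ofReal p) volume) :
    ∃ b : ℝ → ℝ, Continuous b ∧ StrictMonoOn b (Ici 0) ∧ b 0 = 0 ∧
      (∀ r : ℝ, 0 ≤ r → b r ^ p
        = N * (volume (ball (0 : EuclideanSpace ℝ (Fin N)) 1)).toReal
          * ∫ t in (0:ℝ)..(r / 2), t ^ (N - 1) * (φ t - φ (r - t)) ^ p) ∧
      ∀ r : ℝ, 0 < r → ∀ Ω Ω' : Set (EuclideanSpace ℝ (Fin N)),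
        IsCompact Ω → Ω.Nonempty → IsCompact Ω' → Ω'.Nonempty →
        eLpNorm (fun x => φ (infDist x Ω) - φ (infDist x Ω')) (ENNReal.ofReal p) volume
          < ENNReal.ofReal (b r) →
        Ω' ⊆ Ω + closedBall (0 : EuclideanSpace ℝ (Fin N)) r := by
  classical
  have hp0 : (0:ℝ) < p := lt_of_lt_of_le one_pos hp
  have hφmono : AntitoneOn φ (Ici 0) := hφanti.antitoneOn
  set ω : ℝ := (volume (ball (0 : EuclideanSpace ℝ (Fin N)) 1)).toReal with hω
  set I : ℝ → ℝ := fun r => ∫ t in (0:ℝ)..(r/2), t ^ (N-1) * (φ t - φ (r - t)) ^ p with hI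
  set g : ℝ → ℝ := fun r => N * ω * I r with hg
  -- continuity of the base-to-power-p map
  have hrpow : Continuous fun x : ℝ => x ^ p :=
    continuous_iff_continuousAt.2 fun x => Real.continuousAt_rpow_const x p (Or.inr hp0.le)
  -- continuity of the integrand, jointly
  have hFcont : Continuous (Function.uncurry fun r t : ℝ =>
      t ^ (N-1) * (φ t - φ (r - t)) ^ p) := by
    apply Continuous.mul
    · exact (continuous_snd.pow _)
    · exact hrpow.comp (((hφcont.comp continuous_snd)).sub
        (hφcont.comp (continuous_fst.sub continuous_snd)))
  have hIcont : Continuous I :=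
    intervalIntegral.continuous_parametric_intervalIntegral_of_continuous hFcont
      (continuous_id.div_const 2)
  -- pointwise nonnegativity of the integrand on [0, r/2] for r ≥ 0
  have hptnn : ∀ r : ℝ, 0 ≤ r → ∀ t ∈ Icc (0:ℝ) (r/2),
      0 ≤ t ^ (N-1) * (φ t - φ (r - t)) ^ p := by
    intro r hr t ht
    have h1 : φ (r - t) ≤ φ t :=
      hφmono ht.1 (mem_Ici.2 (by linarith [ht.1, ht.2])) (by linarith [ht.2])
    exact mul_nonneg (pow_nonneg ht.1 _) (Real.rpow_nonneg (by linarith) _)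
  have hInn : ∀ r : ℝ, 0 ≤ r → 0 ≤ I r := by
    intro r hr
    exact intervalIntegral.integral_nonneg (by linarith) (hptnn r hr)
  have hgnn : ∀ r : ℝ, 0 ≤ r → 0 ≤ g r := fun r hr =>
    mul_nonneg (mul_nonneg (Nat.cast_nonneg _) ENNReal.toReal_nonneg) (hInn r hr)
  -- strict monotonicity of I on [0, ∞)
  have hImono : StrictMonoOn I (Ici 0) := by
    intro r₁ hr₁ r₂ hr₂ h12
    simp only [mem_Ici] at hr₁ hr₂
    have hint : ∀ r a b : ℝ, IntervalIntegrable
        (fun t => t ^ (N-1) * (φ t - φ (r - t)) ^ p) volume a b := by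
      intro r a b
      exact (Continuous.mul (continuous_pow _)
        (hrpow.comp (hφcont.sub (hφcont.comp (continuous_const.sub continuous_id))))).intervalIntegrable a b
    have hsplit : I r₂ = (∫ t in (0:ℝ)..(r₁/2), t ^ (N-1) * (φ t - φ (r₂ - t)) ^ p)
        + ∫ t in (r₁/2)..(r₂/2), t ^ (N-1) * (φ t - φ (r₂ - t)) ^ p := by
      rw [hI]
      exact (intervalIntegral.integral_add_adjacent_intervals (hint r₂ 0 (r₁/2))
        (hint r₂ (r₁/2) (r₂/2))).symm
    have hmono1 : I r₁ ≤ ∫ t in (0:ℝ)..(r₁/2), t ^ (N-1) * (φ t - φ (r₂ - t)) ^ p := by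
      apply intervalIntegral.integral_mono_on (by linarith) (hint r₁ 0 (r₁/2))
        (hint r₂ 0 (r₁/2))
      intro t ht
      have htr : t ≤ r₁ - t := by
        have := ht.2; linarith
      have hd1 : 0 ≤ φ t - φ (r₁ - t) := by
        have := hφmono ht.1 (by simp only [mem_Ici]; linarith [ht.1]) htr
        linarith
      have hd2 : φ (r₂ - t) ≤ φ (r₁ - t) := by
        apply hφmono (by simp only [mem_Ici]; linarith [ht.1])
          (by simp only [mem_Ici]; linarith [ht.1]) (by linarith)
      have := Real.rpow_le_rpow hd1 (by linarith : φ t - φ (r₁ - t) ≤ φ t - φ (r₂ - t)) hp0.le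
      exact mul_le_mul_of_nonneg_left this (pow_nonneg ht.1 _)
    have hpos2 : 0 < ∫ t in (r₁/2)..(r₂/2), t ^ (N-1) * (φ t - φ (r₂ - t)) ^ p := by
      apply intervalIntegral.intervalIntegral_pos_of_pos_on (hint r₂ (r₁/2) (r₂/2))
      · intro t ht
        have ht1 : 0 < t := lt_of_le_of_lt (by linarith) ht.1
        have ht2 : t < r₂ - t := by have := ht.2; linarith
        have hφd : φ (r₂ - t) < φ t := hφanti (le_of_lt ht1) (by simp only [mem_Ici]; linarith) ht2
        exact mul_pos (pow_pos ht1 _) (Real.rpow_pos_of_pos (by linarith) _)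
      · linarith
    calc I r₁ ≤ ∫ t in (0:ℝ)..(r₁/2), t ^ (N-1) * (φ t - φ (r₂ - t)) ^ p := hmono1
      _ < _ := by rw [hsplit]; linarith
  have hgmono : StrictMonoOn g (Ici 0) := by
    intro x hx y hy hxy
    have hωpos : 0 < ω := by
      rw [hω]
      apply ENNReal.toReal_pos
      · exact (measure_ball_pos volume (0 : EuclideanSpace ℝ (Fin N)) one_pos).ne'
      · exact (measure_ball_lt_top).ne
    have hNpos : (0:ℝ) < N := by exact_mod_cast Nat.pos_of_ne_zero (by omega)
    show (N:ℝ) * ω * I x < (N:ℝ) * ω * I y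
    exact mul_lt_mul_of_pos_left (hImono hx hy hxy) (mul_pos hNpos hωpos)
  have hI0 : I 0 = 0 := by
    simp [hI]
  have hg0 : g 0 = 0 := by simp [hg, hI0]
  -- the function b
  refine ⟨fun r => (g (max r 0)) ^ (1/p), ?_, ?_, ?_, ?_, ?_⟩
  · -- continuity
    have : Continuous fun r => g (max r 0) := by
      apply Continuous.mul continuous_const
      exact hIcont.comp (continuous_id.max continuous_const)
    exact this.rpow_const fun x => Or.inr (by positivity)
  · -- strict monotonicity
    intro x hx y hy hxy
    simp only [mem_Ici] at hx hy
    have hx' : x ⊔ 0 = x := sup_eq_left.2 hx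
    have hy' : y ⊔ 0 = y := sup_eq_left.2 hy
    simp only [hx', hy']
    exact Real.rpow_lt_rpow (hgnn x hx) (hgmono hx hy hxy) (by positivity)
  · -- b 0 = 0
    simp only [max_self, hg0]
    exact Real.zero_rpow (by positivity)
  · -- the formula
    intro r hr
    have hr' : r ⊔ 0 = r := sup_eq_left.2 hr
    simp only [hr']
    rw [one_div, Real.rpow_inv_rpow (hgnn r hr) hp0.ne']
  · -- the main implication
    intro r hr Ω Ω' hΩc hΩne hΩ'c hΩ'ne hlt
    intro x₀ hx₀
    by_contra hnot
    -- Step A : r < infDist x₀ Ω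
    have hA : r < infDist x₀ Ω := by
      by_contra hle
      push_neg at hle
      obtain ⟨y, hyΩ, hdy⟩ := hΩc.exists_infDist_eq_dist hΩne x₀
      apply hnot
      have h2 : x₀ - y ∈ closedBall (0 : EuclideanSpace ℝ (Fin N)) r := by
        rw [mem_closedBall, dist_zero_right, ← dist_eq_norm, ← hdy]
        exact hle
      have := Set.add_mem_add hyΩ h2
      simpa using this
    set f : EuclideanSpace ℝ (Fin N) → ℝ := fun x => φ (infDist x Ω) - φ (infDist x Ω') with hf
    -- Step B : pointwise bounds on the closed ball
    have hB : ∀ x ∈ closedBall x₀ (r/2),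
        0 ≤ φ (dist x x₀) - φ (r - dist x x₀) ∧
        φ (dist x x₀) - φ (r - dist x x₀) ≤ |f x| := by
      intro x hx
      rw [mem_closedBall] at hx
      set t := dist x x₀ with hht
      have ht0 : 0 ≤ t := dist_nonneg
      have h1 : infDist x Ω' ≤ t := infDist_le_dist_of_mem hx₀
      have h2 : r - t ≤ infDist x Ω := by
        have := infDist_le_infDist_add_dist (x := x₀) (y := x) (s := Ω)
        rw [dist_comm] at this
        linarith
      have hb1 : φ t ≤ φ (infDist x Ω') :=
        hφmono (infDist_nonneg) ht0 h1
      have hb2 : φ (infDist x Ω) ≤ φ (r - t) :=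
        hφmono (by simp only [mem_Ici]; linarith) (by simp only [mem_Ici]; linarith) h2
      have hnn : 0 ≤ φ t - φ (r - t) := by
        have := hφmono ht0 (by simp only [mem_Ici]; linarith) (by linarith : t ≤ r - t)
        linarith
      constructor
      · exact hnn
      · have : φ t - φ (r - t) ≤ -(f x) := by simp only [hf]; linarith
        calc φ t - φ (r - t) ≤ -(f x) := this
          _ ≤ |f x| := neg_le_abs _
    -- Step C : b r ^ p equals an integral over the ball
    haveI : Nonempty (Fin N) := ⟨⟨0, hN⟩⟩
    haveI : Nontrivial (EuclideanSpace ℝ (Fin N)) := inferInstance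
    set f₀ : ℝ → ℝ := (Icc (0:ℝ) (r/2)).indicator (fun t => (φ t - φ (r - t)) ^ p) with hf₀
    have hdim : Module.finrank ℝ (EuclideanSpace ℝ (Fin N)) = N := finrank_euclideanSpace_fin
    have hpolar : ∫ x : EuclideanSpace ℝ (Fin N), f₀ ‖x‖ = N • ω • ∫ y in Ioi (0:ℝ), y ^ (N - 1) • f₀ y := by
      have h := integral_fun_norm_addHaar (volume : Measure (EuclideanSpace ℝ (Fin N))) f₀
      rw [hdim] at h
      exact h
    have hC2 : ∫ y in Ioi (0:ℝ), y ^ (N - 1) • f₀ y = I r := by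
      have : ∀ y : ℝ, y ^ (N - 1) • f₀ y
          = (Icc (0:ℝ) (r/2)).indicator (fun t => t ^ (N-1) * (φ t - φ (r - t)) ^ p) y := by
        intro y
        by_cases hy : y ∈ Icc (0:ℝ) (r/2) <;> simp [hf₀, indicator, hy]
      simp_rw [this]
      rw [setIntegral_indicator measurableSet_Icc]
      have hset : Ioi (0:ℝ) ∩ Icc (0:ℝ) (r/2) = Ioc (0:ℝ) (r/2) := by
        ext y; simp only [mem_inter_iff, mem_Ioi, mem_Icc, mem_Ioc]
        constructor
        · rintro ⟨h1, _, h3⟩; exact ⟨h1, h3⟩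
        · rintro ⟨h1, h2⟩; exact ⟨h1, h1.le, h2⟩
      rw [hset]
      simp only [hI]
      exact (intervalIntegral.integral_of_le (by linarith)).symm
    have hC3 : ∫ x : EuclideanSpace ℝ (Fin N), f₀ ‖x - x₀‖ = ∫ x : EuclideanSpace ℝ (Fin N), f₀ ‖x‖ :=
      integral_sub_right_eq_self (fun x => f₀ ‖x‖) x₀
    set A : EuclideanSpace ℝ (Fin N) → ℝ := fun x => (φ (dist x x₀) - φ (r - dist x x₀)) ^ p with hA'
    have hC4 : ∫ x : EuclideanSpace ℝ (Fin N), f₀ ‖x - x₀‖ = ∫ x in closedBall x₀ (r/2), A x := by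
      have : ∀ x : EuclideanSpace ℝ (Fin N), f₀ ‖x - x₀‖ = (closedBall x₀ (r/2)).indicator A x := by
        intro x
        have hd : ‖x - x₀‖ = dist x x₀ := (dist_eq_norm x x₀).symm
        by_cases hx : x ∈ closedBall x₀ (r/2)
        · rw [mem_closedBall] at hx
          simp [hf₀, indicator, hd, hx, dist_nonneg, mem_closedBall.2 hx, hA']
        · rw [Set.indicator_of_notMem hx, hf₀, Set.indicator_of_notMem]
          rw [mem_Icc, hd]
          rw [mem_closedBall] at hx
          push_neg at hx
          rintro ⟨-, h2⟩
          exact absurd h2 (not_le.2 hx)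
      simp_rw [this]
      rw [integral_indicator measurableSet_closedBall]
    have hbrp : ((g r) ^ (1/p)) ^ p = ∫ x in closedBall x₀ (r/2), A x := by
      rw [one_div, Real.rpow_inv_rpow (hgnn r hr.le) hp0.ne']
      rw [hg]
      simp only
      rw [← hC2, ← hC4, hC3, hpolar]
      simp [nsmul_eq_mul, smul_eq_mul, mul_assoc]
    -- Step D : contradiction via the Lp norm
    have hq0 : ENNReal.ofReal p ≠ 0 := by
      simp [ENNReal.ofReal_eq_zero, not_le, hp0]
    have hqt : ENNReal.ofReal p ≠ ⊤ := ENNReal.ofReal_ne_top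
    have help : eLpNorm f (ENNReal.ofReal p) volume
        = (∫⁻ x, (‖f x‖₊ : ENNReal) ^ p ∂volume) ^ (1/p) := by
      rw [eLpNorm_eq_lintegral_rpow_enorm_toReal hq0 hqt, ENNReal.toReal_ofReal hp0.le]
      rfl
    set br : ℝ := (g r) ^ (1/p) with hbr
    have hbrnn : 0 ≤ br := Real.rpow_nonneg (hgnn r hr.le) _
    -- core inequality
    have hcore : ENNReal.ofReal (br ^ p) ≤ ∫⁻ x, (‖f x‖₊ : ENNReal) ^ p ∂volume := by
      rw [hbrp]
      calc ENNReal.ofReal (∫ x in closedBall x₀ (r/2), A x)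
          ≤ (‖∫ x in closedBall x₀ (r/2), A x‖₊ : ENNReal) := by
            rw [← enorm_eq_nnnorm, Real.enorm_eq_ofReal_abs]
            exact ENNReal.ofReal_le_ofReal (le_abs_self _)
        _ ≤ ∫⁻ x in closedBall x₀ (r/2), (‖A x‖₊ : ENNReal) ∂volume :=
            enorm_integral_le_lintegral_enorm _
        _ ≤ ∫⁻ x in closedBall x₀ (r/2), (‖f x‖₊ : ENNReal) ^ p ∂volume := by
            apply lintegral_mono_ae
            filter_upwards [ae_restrict_mem measurableSet_closedBall] with x hx
            obtain ⟨hnn, hle⟩ := hB x hx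
            have hAnn : 0 ≤ A x := Real.rpow_nonneg hnn _
            rw [← enorm_eq_nnnorm, Real.enorm_eq_ofReal_abs, abs_of_nonneg hAnn, ← enorm_eq_nnnorm, Real.enorm_eq_ofReal_abs]
            rw [ENNReal.ofReal_rpow_of_nonneg (abs_nonneg _) hp0.le]
            apply ENNReal.ofReal_le_ofReal
            exact Real.rpow_le_rpow hnn hle hp0.le
        _ ≤ ∫⁻ x, (‖f x‖₊ : ENNReal) ^ p ∂volume := setLIntegral_le_lintegral _ _
    have hfinal : ENNReal.ofReal br ≤ eLpNorm f (ENNReal.ofReal p) volume := by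
      rw [help]
      have h1 : ENNReal.ofReal br = (ENNReal.ofReal (br ^ p)) ^ (1/p) := by
        rw [← ENNReal.ofReal_rpow_of_nonneg hbrnn hp0.le, one_div,
          ENNReal.rpow_rpow_inv hp0.ne']
      rw [h1]
      exact ENNReal.rpow_le_rpow hcore (by positivity)
    have hr' : r ⊔ 0 = r := sup_eq_left.2 hr.le
    have hlt' : eLpNorm f (ENNReal.ofReal p) volume < ENNReal.ofReal ((g (r ⊔ 0)) ^ (1/p)) := hlt
    rw [hr'] at hlt'
    exact absurd hfinal (not_le.2 hlt')
end

section
/- The metric space of nonempty compact subsets of ℝ^N with distance d(A,B) = ‖φ∘u_A − φ∘u_B‖_{L^p} is complete. -/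
open Metric MeasureTheory Set Filter
open scoped ENNReal NNReal

namespace Stmt18

lemma aux_le_infDist {α : Type*} [PseudoMetricSpace α] {s : Set α} {x : α} {b : ℝ}
    (hs : s.Nonempty) (h : ∀ y ∈ s, b ≤ dist x y) : b ≤ infDist x s := by
  by_contra h'
  push_neg at h'
  obtain ⟨y, hy, hxy⟩ := (infDist_lt_iff hs).1 h'
  exact absurd (h y hy) (by linarith)

lemma aux_uc (φ : ℝ → ℝ) (hφpos : ∀ t : ℝ, 0 ≤ t → 0 < φ t) (hφcont : Continuous φ)
    (hφanti : StrictAntiOn φ (Ici 0)) {ε : ℝ} (hε : 0 < ε) :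
    ∃ δ > 0, ∀ s ∈ Ici (0:ℝ), ∀ t ∈ Ici (0:ℝ), |s - t| < δ → |φ s - φ t| ≤ ε := by
  set ℓ := sInf (φ '' Ici 0) with hℓ
  have hbdd : BddBelow (φ '' Ici 0) := ⟨0, by rintro y ⟨t, ht, rfl⟩; exact (hφpos t ht).le⟩
  have hne : (φ '' Ici 0).Nonempty := ⟨φ 0, 0, self_mem_Ici, rfl⟩
  have hl_le : ∀ t ∈ Ici (0:ℝ), ℓ ≤ φ t := fun t ht => csInf_le hbdd ⟨t, ht, rfl⟩
  obtain ⟨y, ⟨T, hT, rfl⟩, hy⟩ := exists_lt_of_csInf_lt hne (show ℓ < ℓ + ε/2 by linarith)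
  have huc := (isCompact_Icc (a := (0:ℝ)) (b := T+1)).uniformContinuousOn_of_continuous
    hφcont.continuousOn
  rw [Metric.uniformContinuousOn_iff] at huc
  obtain ⟨δ₀, hδ₀, hδ⟩ := huc (ε/2) (by linarith)
  refine ⟨min δ₀ 1, by positivity, ?_⟩
  have key : ∀ s ∈ Ici (0:ℝ), ∀ t ∈ Ici (0:ℝ), s ≤ t → |s - t| < min δ₀ 1 → |φ s - φ t| ≤ ε := by
    intro s hs t ht hst hd
    rcases le_or_gt t (T+1) with hc | hc
    · have := hδ s ⟨hs, by linarith⟩ t ⟨ht, hc⟩ (lt_of_lt_of_le hd (min_le_left _ _))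
      rw [Real.dist_eq] at this
      linarith [this.le]
    · have hsT : T ≤ s := by
        have h1 : |s - t| < 1 := lt_of_lt_of_le hd (min_le_right _ _)
        rw [abs_lt] at h1; linarith
      have h1 : φ s ≤ φ T := hφanti.antitoneOn hT hs hsT
      have h2 : φ t ≤ φ T := hφanti.antitoneOn hT ht (by linarith)
      have h3 := hl_le s hs
      have h4 := hl_le t ht
      rw [abs_le]; constructor <;> linarith
  intro s hs t ht hd
  rcases le_total s t with h | h
  · exact key s hs t ht h hd
  · rw [abs_sub_comm] at hd ⊢; exact key t ht s hs h hd

variable {N : ℕ}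
lemma aux_f_le_g (φ : ℝ → ℝ) (hφanti : StrictAntiOn φ (Ici 0))
    {A : Set (EuclideanSpace ℝ (Fin N))} (hA : A.Nonempty) {R : ℝ}
    (hAR : A ⊆ closedBall 0 R) (x : EuclideanSpace ℝ (Fin N)) :
    φ (infDist x A) ≤ φ (max (‖x‖ - R) 0) := by
  have h1 : max (‖x‖ - R) 0 ≤ infDist x A := by
    apply max_le _ infDist_nonneg
    apply aux_le_infDist hA
    intro y hy
    have hyR : ‖y‖ ≤ R := by simpa [dist_eq_norm] using mem_closedBall.1 (hAR hy)
    rw [dist_eq_norm]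
    have := norm_sub_norm_le x y
    linarith
  exact hφanti.antitoneOn (mem_Ici.2 (le_max_right _ _)) (mem_Ici.2 (le_trans (le_max_right _ _) h1)) h1

lemma aux_memLp_g (p : ℝ) (hp : 1 ≤ p) (φ : ℝ → ℝ)
    (hφpos : ∀ t : ℝ, 0 ≤ t → 0 < φ t) (hφcont : Continuous φ)
    (hφanti : StrictAntiOn φ (Ici 0))
    (hφLp : MemLp (fun x : EuclideanSpace ℝ (Fin N) => φ ‖x‖) (ENNReal.ofReal p) volume)
    {R : ℝ} (hR : 0 ≤ R) :
    MemLp (fun x : EuclideanSpace ℝ (Fin N) => φ (max (‖x‖ - R) 0)) (ENNReal.ofReal p)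
      volume := by
  set q := ENNReal.ofReal p with hq
  have hgcont : Continuous fun x : EuclideanSpace ℝ (Fin N) => φ (max (‖x‖ - R) 0) :=
    hφcont.comp ((continuous_norm.sub continuous_const).max continuous_const)
  -- the scaled function
  have hsmul : MemLp (fun x : EuclideanSpace ℝ (Fin N) => φ ‖(2⁻¹:ℝ) • x‖) q volume := by
    have hmap : Measure.map (((2:ℝ)⁻¹) • ·) (volume : Measure (EuclideanSpace ℝ (Fin N)))
        = ENNReal.ofReal |(((2:ℝ)⁻¹) ^ (Module.finrank ℝ (EuclideanSpace ℝ (Fin N))))⁻¹| •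
          volume := Measure.map_addHaar_smul volume (by norm_num)
    have h1 : MemLp (fun x : EuclideanSpace ℝ (Fin N) => φ ‖x‖) q
        (Measure.map (((2:ℝ)⁻¹) • ·) (volume : Measure (EuclideanSpace ℝ (Fin N)))) := by
      rw [hmap]
      exact hφLp.smul_measure ENNReal.ofReal_ne_top
    have := h1.comp_of_map (by fun_prop)
    exact this
  -- indicator part
  have hind : MemLp ((closedBall (0:EuclideanSpace ℝ (Fin N)) (2*R)).indicator
      fun _ => φ 0) q volume :=
    memLp_indicator_const q measurableSet_closedBall _ (Or.inr measure_closedBall_lt_top.ne)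
  have hsum := hind.add hsmul
  refine hsum.of_le hgcont.aestronglyMeasurable (ae_of_all _ fun x => ?_)
  have hg0 : 0 < φ (max (‖x‖ - R) 0) := hφpos _ (le_max_right _ _)
  have hs0 : 0 < φ ‖(2⁻¹:ℝ) • x‖ := hφpos _ (norm_nonneg _)
  rw [Real.norm_eq_abs, abs_of_pos hg0, Pi.add_apply]
  have hindnn : (0:ℝ) ≤ ((closedBall (0:EuclideanSpace ℝ (Fin N)) (2*R)).indicator
      (fun _ => φ 0)) x :=
    Set.indicator_nonneg (fun y _ => (hφpos 0 le_rfl).le) x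
  refine le_trans ?_ (le_abs_self _)
  rcases le_or_gt ‖x‖ (2*R) with hc | hc
  · have hball : x ∈ closedBall (0:EuclideanSpace ℝ (Fin N)) (2*R) := by
      simpa [dist_eq_norm] using hc
    have h1 : φ (max (‖x‖ - R) 0) ≤ φ 0 :=
      hφanti.antitoneOn self_mem_Ici (mem_Ici.2 (le_max_right _ _)) (le_max_right _ _)
    rw [Set.indicator_of_mem hball]
    linarith
  · have hxhalf : ‖(2⁻¹:ℝ) • x‖ = 2⁻¹ * ‖x‖ := by
      rw [norm_smul, Real.norm_eq_abs]; norm_num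
    have hmax : max (‖x‖ - R) 0 = ‖x‖ - R := max_eq_left (by linarith)
    have h1 : φ (max (‖x‖ - R) 0) ≤ φ ‖(2⁻¹:ℝ) • x‖ := by
      rw [hmax, hxhalf]
      exact hφanti.antitoneOn (show (0:ℝ) ≤ 2⁻¹ * ‖x‖ by positivity)
        (show (0:ℝ) ≤ ‖x‖ - R by linarith) (by linarith)
    linarith

lemma aux_memLp_f (p : ℝ) (hp : 1 ≤ p) (φ : ℝ → ℝ)
    (hφpos : ∀ t : ℝ, 0 ≤ t → 0 < φ t) (hφcont : Continuous φ)
    (hφanti : StrictAntiOn φ (Ici 0))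
    (hφLp : MemLp (fun x : EuclideanSpace ℝ (Fin N) => φ ‖x‖) (ENNReal.ofReal p) volume)
    {A : Set (EuclideanSpace ℝ (Fin N))} (hA : A.Nonempty) (hAc : IsCompact A) :
    MemLp (fun x : EuclideanSpace ℝ (Fin N) => φ (infDist x A)) (ENNReal.ofReal p) volume := by
  obtain ⟨R₀, hR₀⟩ := (isBounded_iff_subset_closedBall 0).1 hAc.isBounded
  have hR : A ⊆ closedBall 0 (max R₀ 0) :=
    hR₀.trans (closedBall_subset_closedBall (le_max_left _ _))
  refine (aux_memLp_g p hp φ hφpos hφcont hφanti hφLp (le_max_right R₀ 0)).of_le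
    (hφcont.comp (continuous_infDist_pt A)).aestronglyMeasurable (ae_of_all _ fun x => ?_)
  have h1 : 0 < φ (infDist x A) := hφpos _ infDist_nonneg
  have h2 : 0 < φ (max (‖x‖ - max R₀ 0) 0) := hφpos _ (le_max_right _ _)
  rw [Real.norm_eq_abs, Real.norm_eq_abs, abs_of_pos h1, abs_of_pos h2]
  exact aux_f_le_g φ hφanti hA hR x
lemma aux_infDist_small (p : ℝ) (hp : 1 ≤ p) (φ : ℝ → ℝ)
    (hφpos : ∀ t : ℝ, 0 ≤ t → 0 < φ t) (hφcont : Continuous φ)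
    (hφanti : StrictAntiOn φ (Ici 0))
    (hφLp : MemLp (fun x : EuclideanSpace ℝ (Fin N) => φ ‖x‖) (ENNReal.ofReal p) volume)
    (Ω : ℕ → Set (EuclideanSpace ℝ (Fin N)))
    (hcp : ∀ n, IsCompact (Ω n)) (hne : ∀ n, (Ω n).Nonempty)
    (hcauchy : ∀ ε : ℝ, 0 < ε → ∃ M : ℕ, ∀ m ≥ M, ∀ n ≥ M,
      (eLpNorm (fun x => φ (infDist x (Ω m)) - φ (infDist x (Ω n)))
        (ENNReal.ofReal p) volume).toReal < ε)
    {δ : ℝ} (hδ : 0 < δ) :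
    ∃ M : ℕ, ∀ m ≥ M, ∀ n ≥ M, ∀ a ∈ Ω m, infDist a (Ω n) ≤ 3 * δ := by
  have hq0 : ENNReal.ofReal p ≠ 0 := by
    simp [ENNReal.ofReal_eq_zero]; linarith
  have hqt : ENNReal.ofReal p ≠ ∞ := ENNReal.ofReal_ne_top
  have hqp : (ENNReal.ofReal p).toReal = p := ENNReal.toReal_ofReal (by linarith)
  set c := φ δ - φ (2*δ) with hc
  have hcpos : 0 < c := by
    have := hφanti (show δ ∈ Ici (0:ℝ) from hδ.le) (show 2*δ ∈ Ici (0:ℝ) by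
      simp [mem_Ici]; linarith) (by linarith)
    linarith
  set v := volume (ball (0:EuclideanSpace ℝ (Fin N)) δ) with hv
  have hv0 : v ≠ 0 := (measure_ball_pos volume 0 hδ).ne'
  have hvt : v ≠ ∞ := measure_ball_lt_top.ne
  set E0 : ℝ≥0∞ := (‖c‖₊ : ℝ≥0∞) * v ^ (1 / p) with hE0
  have hE0_0 : E0 ≠ 0 := by
    apply mul_ne_zero
    · simpa using hcpos.ne'
    · simp [ENNReal.rpow_eq_zero_iff, hv0, hvt]
  have hE0_t : E0 ≠ ∞ := by
    apply ENNReal.mul_ne_top ENNReal.coe_ne_top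
    exact ENNReal.rpow_ne_top_of_nonneg (by positivity) hvt
  have hεpos : 0 < E0.toReal := ENNReal.toReal_pos hE0_0 hE0_t
  obtain ⟨M, hM⟩ := hcauchy E0.toReal hεpos
  refine ⟨M, fun m hm n hn a ha => ?_⟩
  by_contra hgt
  push_neg at hgt
  -- pointwise lower bound on ball a δ
  have hpt : ∀ x, ‖(ball a δ).indicator (fun _ => c) x‖ ≤
      ‖φ (infDist x (Ω m)) - φ (infDist x (Ω n))‖ := by
    intro x
    by_cases hx : x ∈ ball a δ
    · rw [Set.indicator_of_mem hx]
      have hxa : dist x a ≤ δ := (mem_ball.1 hx).le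
      have h1 : infDist x (Ω m) ≤ δ := le_trans (infDist_le_dist_of_mem ha) hxa
      have h2 : φ δ ≤ φ (infDist x (Ω m)) :=
        hφanti.antitoneOn (show infDist x (Ω m) ∈ Ici (0:ℝ) from infDist_nonneg)
          (show δ ∈ Ici (0:ℝ) from hδ.le) h1
      have h3 : 2*δ ≤ infDist x (Ω n) := by
        have := infDist_le_infDist_add_dist (x := a) (y := x) (s := Ω n)
        rw [dist_comm] at this
        linarith
      have h4 : φ (infDist x (Ω n)) ≤ φ (2*δ) :=
        hφanti.antitoneOn (show 2*δ ∈ Ici (0:ℝ) by simp [mem_Ici]; linarith)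
          (show infDist x (Ω n) ∈ Ici (0:ℝ) from infDist_nonneg) h3
      rw [Real.norm_eq_abs, Real.norm_eq_abs, abs_of_pos hcpos]
      have : c ≤ φ (infDist x (Ω m)) - φ (infDist x (Ω n)) := by rw [hc]; linarith
      exact le_trans this (le_abs_self _)
    · rw [Set.indicator_of_notMem hx]; simp
  have hlow : E0 ≤ eLpNorm (fun x => φ (infDist x (Ω m)) - φ (infDist x (Ω n)))
      (ENNReal.ofReal p) volume := by
    have h1 := eLpNorm_mono hpt (p := ENNReal.ofReal p) (μ := volume)
    rwa [eLpNorm_indicator_const measurableSet_ball hq0 hqt, hqp,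
      Measure.addHaar_ball_center volume a δ] at h1
  have hfin : eLpNorm (fun x => φ (infDist x (Ω m)) - φ (infDist x (Ω n)))
      (ENNReal.ofReal p) volume < ∞ := by
    have hsub := (aux_memLp_f p hp φ hφpos hφcont hφanti hφLp (hne m) (hcp m)).sub
      (aux_memLp_f p hp φ hφpos hφcont hφanti hφLp (hne n) (hcp n))
    exact hsub.2
  have := ENNReal.toReal_mono hfin.ne hlow
  exact absurd (hM m hm n hn) (by linarith)

lemma aux_bounded (p : ℝ) (hp : 1 ≤ p) (φ : ℝ → ℝ)
    (hφpos : ∀ t : ℝ, 0 ≤ t → 0 < φ t) (hφcont : Continuous φ)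
    (hφanti : StrictAntiOn φ (Ici 0))
    (hφLp : MemLp (fun x : EuclideanSpace ℝ (Fin N) => φ ‖x‖) (ENNReal.ofReal p) volume)
    (Ω : ℕ → Set (EuclideanSpace ℝ (Fin N)))
    (hcp : ∀ n, IsCompact (Ω n)) (hne : ∀ n, (Ω n).Nonempty)
    (hcauchy : ∀ ε : ℝ, 0 < ε → ∃ M : ℕ, ∀ m ≥ M, ∀ n ≥ M,
      (eLpNorm (fun x => φ (infDist x (Ω m)) - φ (infDist x (Ω n)))
        (ENNReal.ofReal p) volume).toReal < ε) :
    ∃ R : ℝ, 0 ≤ R ∧ ∀ n, Ω n ⊆ closedBall 0 R := by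
  obtain ⟨M, hM⟩ := aux_infDist_small p hp φ hφpos hφcont hφanti hφLp Ω hcp hne hcauchy
    (δ := 1) one_pos
  have hbd : Bornology.IsBounded (⋃ k ∈ Iic M, Ω k) :=
    (Bornology.isBounded_biUnion (Set.finite_Iic M)).2 (fun k _ => (hcp k).isBounded)
  obtain ⟨R₀, hR₀⟩ := (isBounded_iff_subset_closedBall 0).1 hbd
  refine ⟨max R₀ 0 + 4, by positivity, fun n => ?_⟩
  have hsub : ∀ k ≤ M, Ω k ⊆ closedBall 0 (max R₀ 0) := by
    intro k hk y hy
    have : y ∈ ⋃ k ∈ Iic M, Ω k := Set.mem_biUnion hk hy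
    exact closedBall_subset_closedBall (le_max_left _ _) (hR₀ this)
  rcases le_or_gt n M with hn | hn
  · exact (hsub n hn).trans (closedBall_subset_closedBall (by linarith))
  · intro a ha
    have h1 : infDist a (Ω M) ≤ 3 * 1 := hM n hn.le M le_rfl a ha
    have h2 : infDist a (Ω M) < 4 := by linarith
    obtain ⟨y, hy, hay⟩ := (infDist_lt_iff (hne M)).1 h2
    have hyR : ‖y‖ ≤ max R₀ 0 := by
      simpa [dist_eq_norm] using mem_closedBall.1 (hsub M le_rfl hy)
    rw [mem_closedBall, dist_eq_norm, sub_zero]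
    calc ‖a‖ ≤ ‖y‖ + ‖a - y‖ := norm_le_insert' a y
      _ ≤ max R₀ 0 + 4 := by
          rw [dist_eq_norm] at hay
          exact add_le_add hyR hay.le
end Stmt18

open Stmt18 in
/-- Completeness of the space of nonempty compact subsets of `ℝ^N` with the distance
`d(A,B) = ‖φ∘u_A − φ∘u_B‖_{L^p}`: every Cauchy sequence converges to some nonempty
compact set. -/
theorem stmt_18 {N : ℕ} (p : ℝ) (hp : 1 ≤ p) (φ : ℝ → ℝ)
    (hφpos : ∀ t : ℝ, 0 ≤ t → 0 < φ t) (hφcont : Continuous φ)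
    (hφanti : StrictAntiOn φ (Ici 0))
    (hφLp : MemLp (fun x : EuclideanSpace ℝ (Fin N) => φ ‖x‖) (ENNReal.ofReal p) volume)
    (Ω : ℕ → Set (EuclideanSpace ℝ (Fin N)))
    (hcp : ∀ n, IsCompact (Ω n)) (hne : ∀ n, (Ω n).Nonempty)
    (hcauchy : ∀ ε : ℝ, 0 < ε → ∃ M : ℕ, ∀ m ≥ M, ∀ n ≥ M,
      (eLpNorm (fun x => φ (infDist x (Ω m)) - φ (infDist x (Ω n)))
        (ENNReal.ofReal p) volume).toReal < ε) :
    ∃ L : Set (EuclideanSpace ℝ (Fin N)), IsCompact L ∧ L.Nonempty ∧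
      Tendsto (fun n => (eLpNorm (fun x => φ (infDist x (Ω n)) - φ (infDist x L))
        (ENNReal.ofReal p) volume).toReal) atTop (nhds 0) := by
  have hq0 : ENNReal.ofReal p ≠ 0 := by
    simp only [ne_eq, ENNReal.ofReal_eq_zero, not_le]; linarith
  have hqt : ENNReal.ofReal p ≠ ∞ := ENNReal.ofReal_ne_top
  have hq1 : 1 ≤ ENNReal.ofReal p := ENNReal.one_le_ofReal.2 hp
  have hqp : (ENNReal.ofReal p).toReal = p := ENNReal.toReal_ofReal (by linarith)
  set K : ℕ → TopologicalSpace.NonemptyCompacts (EuclideanSpace ℝ (Fin N)) :=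
    fun n => ⟨⟨Ω n, hcp n⟩, hne n⟩ with hKdef
  have hsmall := fun {δ : ℝ} (hδ : 0 < δ) =>
    aux_infDist_small p hp φ hφpos hφcont hφanti hφLp Ω hcp hne hcauchy hδ
  have hKcauchy : CauchySeq K := by
    rw [Metric.cauchySeq_iff]
    intro ε hε
    obtain ⟨M, hM⟩ := hsmall (show 0 < ε/7 by linarith)
    refine ⟨M, fun m hm n hn => ?_⟩
    have h1 : hausdorffDist (Ω m) (Ω n) ≤ 3 * (ε/7) :=
      hausdorffDist_le_of_infDist (by linarith) (fun x hx => hM m hm n hn x hx)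
        (fun x hx => hM n hn m hm x hx)
    have h2 : dist (K m) (K n) = hausdorffDist (Ω m) (Ω n) := rfl
    rw [h2]; linarith
  obtain ⟨Klim, hKlim⟩ := cauchySeq_tendsto_of_complete hKcauchy
  refine ⟨Klim, Klim.isCompact, Klim.nonempty, ?_⟩
  have hdH : Tendsto (fun n => hausdorffDist (Ω n) (Klim : Set (EuclideanSpace ℝ (Fin N))))
      atTop (nhds 0) := tendsto_iff_dist_tendsto_zero.1 hKlim
  have hfin : ∀ n, EMetric.hausdorffEdist (Ω n)
      (Klim : Set (EuclideanSpace ℝ (Fin N))) ≠ ⊤ := fun n =>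
    hausdorffEdist_ne_top_of_nonempty_of_bounded (hne n) Klim.nonempty
      (hcp n).isBounded Klim.isCompact.isBounded
  have hfin' : ∀ n, EMetric.hausdorffEdist (Klim : Set (EuclideanSpace ℝ (Fin N)))
      (Ω n) ≠ ⊤ := fun n => ne_of_eq_of_ne EMetric.hausdorffEdist_comm (hfin n)
  have habs : ∀ n x, |infDist x (Ω n) - infDist x (Klim : Set (EuclideanSpace ℝ (Fin N)))| ≤
      hausdorffDist (Ω n) (Klim : Set (EuclideanSpace ℝ (Fin N))) := by
    intro n x
    rw [abs_le]
    constructor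
    · have h1 := infDist_le_infDist_add_hausdorffDist (x := x) (hfin n)
      linarith
    · have h2 := infDist_le_infDist_add_hausdorffDist (x := x) (hfin' n)
      have h3 : hausdorffDist (Klim : Set (EuclideanSpace ℝ (Fin N))) (Ω n)
          = hausdorffDist (Ω n) (Klim : Set (EuclideanSpace ℝ (Fin N))) := hausdorffDist_comm
      linarith
  obtain ⟨R, hR0, hΩR⟩ := aux_bounded p hp φ hφpos hφcont hφanti hφLp Ω hcp hne hcauchy
  have hLR : (Klim : Set (EuclideanSpace ℝ (Fin N))) ⊆ closedBall 0 R := by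
    intro x hx
    have key : ∀ n, ‖x‖ - R ≤ hausdorffDist (Ω n) (Klim : Set (EuclideanSpace ℝ (Fin N))) := by
      intro n
      have h1 : ‖x‖ - R ≤ infDist x (Ω n) := by
        apply aux_le_infDist (hne n)
        intro y hy
        have hyR : ‖y‖ ≤ R := by simpa [dist_eq_norm] using mem_closedBall.1 (hΩR n hy)
        rw [dist_eq_norm]
        have := norm_sub_norm_le x y
        linarith
      have h2 := habs n x
      have h0 : infDist x (Klim : Set (EuclideanSpace ℝ (Fin N))) = 0 := infDist_zero_of_mem hx
      rw [abs_le] at h2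
      linarith [h2.2]
    have := ge_of_tendsto hdH (Eventually.of_forall key)
    rw [mem_closedBall, dist_eq_norm, sub_zero]
    linarith
  have hg := aux_memLp_g p hp φ hφpos hφcont hφanti hφLp hR0
  rw [Metric.tendsto_atTop]
  intro ε hε
  obtain ⟨s, hsm, hsμ, hstail⟩ := hg.exists_eLpNorm_indicator_compl_lt hqt
    (show ENNReal.ofReal (ε/8) ≠ 0 by
      simp only [ne_eq, ENNReal.ofReal_eq_zero, not_le]; linarith)
  set W := (volume s) ^ (1 / p) with hW
  have hWt : W ≠ ∞ := ENNReal.rpow_ne_top_of_nonneg (by positivity) hsμ.ne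
  set w := W.toReal with hw
  have hw0 : 0 ≤ w := ENNReal.toReal_nonneg
  have hε₁ : 0 < (ε/8)/(w+1) := by positivity
  obtain ⟨δ, hδpos, hδuc⟩ := aux_uc φ hφpos hφcont hφanti hε₁
  obtain ⟨M, hM⟩ := (Metric.tendsto_atTop.1 hdH) δ hδpos
  refine ⟨M, fun n hn => ?_⟩
  have hdn : hausdorffDist (Ω n) (Klim : Set (EuclideanSpace ℝ (Fin N))) < δ := by
    have := hM n hn
    rwa [Real.dist_eq, sub_zero, abs_of_nonneg hausdorffDist_nonneg] at this
  set D : EuclideanSpace ℝ (Fin N) → ℝ :=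
    fun x => φ (infDist x (Ω n)) - φ (infDist x (Klim : Set (EuclideanSpace ℝ (Fin N))))
    with hDdef
  have hDasm : AEStronglyMeasurable D volume :=
    ((hφcont.comp (continuous_infDist_pt _)).sub
      (hφcont.comp (continuous_infDist_pt _))).aestronglyMeasurable
  have hb1 : eLpNorm (s.indicator D) (ENNReal.ofReal p) volume ≤ ENNReal.ofReal (ε/8) := by
    have hmono : ∀ x, ‖s.indicator D x‖ ≤ ‖s.indicator (fun _ => (ε/8)/(w+1)) x‖ := by
      intro x
      by_cases hx : x ∈ s
      · rw [Set.indicator_of_mem hx, Set.indicator_of_mem hx, Real.norm_eq_abs,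
          Real.norm_eq_abs, abs_of_pos hε₁]
        exact hδuc _ infDist_nonneg _ infDist_nonneg (lt_of_le_of_lt (habs n x) hdn)
      · simp [Set.indicator_of_notMem hx]
    calc eLpNorm (s.indicator D) (ENNReal.ofReal p) volume
        ≤ eLpNorm (s.indicator fun _ => (ε/8)/(w+1)) (ENNReal.ofReal p) volume :=
          eLpNorm_mono hmono
      _ = ‖(ε/8)/(w+1)‖₊ * volume s ^ (1/(ENNReal.ofReal p).toReal) :=
          eLpNorm_indicator_const hsm hq0 hqt
      _ = ENNReal.ofReal ((ε/8)/(w+1)) * W := by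
          rw [hqp, ← Real.enorm_eq_ofReal hε₁.le]; rfl
      _ = ENNReal.ofReal ((ε/8)/(w+1)) * ENNReal.ofReal w := by
          rw [hw, ENNReal.ofReal_toReal hWt]
      _ = ENNReal.ofReal ((ε/8)/(w+1) * w) := (ENNReal.ofReal_mul hε₁.le).symm
      _ ≤ ENNReal.ofReal (ε/8) := ENNReal.ofReal_le_ofReal (by
          have h1 : (ε/8)/(w+1) * (w+1) = ε/8 := div_mul_cancel₀ _ (by positivity)
          nlinarith)
  have hb2 : eLpNorm (sᶜ.indicator D) (ENNReal.ofReal p) volume ≤ ENNReal.ofReal (ε/4) := by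
    have hmono : ∀ x, ‖sᶜ.indicator D x‖ ≤
        ‖((2:ℝ) • sᶜ.indicator (fun x : EuclideanSpace ℝ (Fin N) =>
          φ (max (‖x‖ - R) 0))) x‖ := by
      intro x
      rw [Pi.smul_apply, smul_eq_mul]
      by_cases hx : x ∈ sᶜ
      · rw [Set.indicator_of_mem hx, Set.indicator_of_mem hx]
        have hgx : 0 < φ (max (‖x‖ - R) 0) := hφpos _ (le_max_right _ _)
        have h1 : φ (infDist x (Ω n)) ≤ φ (max (‖x‖ - R) 0) :=
          aux_f_le_g φ hφanti (hne n) (hΩR n) x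
        have h2 : φ (infDist x (Klim : Set (EuclideanSpace ℝ (Fin N)))) ≤
            φ (max (‖x‖ - R) 0) := aux_f_le_g φ hφanti Klim.nonempty hLR x
        have h3 : 0 < φ (infDist x (Ω n)) := hφpos _ infDist_nonneg
        have h4 : 0 < φ (infDist x (Klim : Set (EuclideanSpace ℝ (Fin N)))) :=
          hφpos _ infDist_nonneg
        rw [Real.norm_eq_abs, Real.norm_eq_abs,
          abs_of_pos (show (0:ℝ) < 2 * φ (max (‖x‖ - R) 0) by linarith), abs_le]
        constructor <;> simp only [hDdef] <;> linarith
      · rw [Set.indicator_of_notMem hx, Set.indicator_of_notMem hx]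
        simp
    calc eLpNorm (sᶜ.indicator D) (ENNReal.ofReal p) volume
        ≤ eLpNorm ((2:ℝ) • sᶜ.indicator (fun x : EuclideanSpace ℝ (Fin N) =>
            φ (max (‖x‖ - R) 0))) (ENNReal.ofReal p) volume := eLpNorm_mono hmono
      _ = ‖(2:ℝ)‖₊ • eLpNorm (sᶜ.indicator (fun x : EuclideanSpace ℝ (Fin N) =>
            φ (max (‖x‖ - R) 0))) (ENNReal.ofReal p) volume := eLpNorm_const_smul _ _ _ _
      _ ≤ ‖(2:ℝ)‖₊ • ENNReal.ofReal (ε/8) := by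
          exact mul_le_mul_right hstail.le _
      _ = ENNReal.ofReal 2 * ENNReal.ofReal (ε/8) := by
          rw [← Real.enorm_eq_ofReal (show (0:ℝ) ≤ 2 by norm_num)]; rfl
      _ = ENNReal.ofReal (2 * (ε/8)) := (ENNReal.ofReal_mul (by norm_num)).symm
      _ = ENNReal.ofReal (ε/4) := by rw [show 2*(ε/8) = ε/4 by ring]
  have htot : eLpNorm D (ENNReal.ofReal p) volume ≤ ENNReal.ofReal (ε/8 + ε/4) := by
    calc eLpNorm D (ENNReal.ofReal p) volume
        = eLpNorm (s.indicator D + sᶜ.indicator D) (ENNReal.ofReal p) volume := by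
          rw [s.indicator_self_add_compl D]
      _ ≤ eLpNorm (s.indicator D) (ENNReal.ofReal p) volume
          + eLpNorm (sᶜ.indicator D) (ENNReal.ofReal p) volume :=
          eLpNorm_add_le (hDasm.indicator hsm) (hDasm.indicator hsm.compl) hq1
      _ ≤ ENNReal.ofReal (ε/8) + ENNReal.ofReal (ε/4) := add_le_add hb1 hb2
      _ = ENNReal.ofReal (ε/8 + ε/4) := (ENNReal.ofReal_add (by linarith) (by linarith)).symm
  rw [Real.dist_eq, sub_zero, abs_of_nonneg ENNReal.toReal_nonneg]
  have hfinal := ENNReal.toReal_le_of_le_ofReal (by linarith) htot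
  calc (eLpNorm (fun x => φ (infDist x (Ω n)) -
        φ (infDist x (Klim : Set (EuclideanSpace ℝ (Fin N)))))
        (ENNReal.ofReal p) volume).toReal
      = (eLpNorm D (ENNReal.ofReal p) volume).toReal := rfl
    _ ≤ ε/8 + ε/4 := hfinal
    _ < ε := by linarith
end

section
/- Given a nonempty compact set A ⊆ ℝ^N containing the origin in its interior, the removal motion t ↦ A \ B_t (removing the open ball of radius t) is a Lipschitz path for the metric d(X,Y) = ‖φ∘u_X − φ∘u_Y‖_{L^p}, for t in a sufficiently small interval [0,T]; indeed ‖v_{A_{r+s}} − v_{A_s}‖_{L^p}^p ≤ ω_N r^p L^p (r+s)^N where L is a Lipschitz constant of φ near 0. -/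
open Metric MeasureTheory Set
open scoped ENNReal NNReal

section Aux

variable {N : ℕ}

lemma exists_norm_eq' (hN : 0 < N) {t : ℝ} (ht : 0 ≤ t) :
    ∃ z : EuclideanSpace ℝ (Fin N), ‖z‖ = t :=
  ⟨EuclideanSpace.single ⟨0, hN⟩ t, by
    rw [EuclideanSpace.norm_single]; exact abs_of_nonneg ht⟩

lemma radial' (hN : 0 < N) {y : EuclideanSpace ℝ (Fin N)} {t : ℝ} (hyt : ‖y‖ ≤ t) :
    ∃ z : EuclideanSpace ℝ (Fin N), ‖z‖ = t ∧ dist y z = t - ‖y‖ := by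
  rcases eq_or_ne y 0 with rfl | hy
  · obtain ⟨z, hz⟩ := exists_norm_eq' hN ((norm_nonneg (0 : EuclideanSpace ℝ (Fin N))).trans hyt)
    exact ⟨z, hz, by simp [dist_eq_norm, hz]⟩
  · have hy0 : 0 < ‖y‖ := norm_pos_iff.mpr hy
    have ht0 : 0 ≤ t := (norm_nonneg y).trans hyt
    refine ⟨(t / ‖y‖) • y, ?_, ?_⟩
    · rw [norm_smul, Real.norm_eq_abs, abs_of_nonneg (div_nonneg ht0 hy0.le),
        div_mul_cancel₀ _ hy0.ne']
    · have h1 : y - (t / ‖y‖) • y = (1 - t / ‖y‖) • y := by rw [sub_smul, one_smul]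
      have h2 : t / ‖y‖ - 1 ≥ 0 := by
        rw [ge_iff_le, sub_nonneg, le_div_iff₀ hy0]; linarith
      rw [dist_eq_norm, h1, norm_smul, Real.norm_eq_abs, abs_of_nonpos (by linarith), neg_sub]
      field_simp

lemma mem_As' {A : Set (EuclideanSpace ℝ (Fin N))} {T : ℝ}
    (hball : closedBall 0 (2 * T) ⊆ A) {z : EuclideanSpace ℝ (Fin N)} {t : ℝ}
    (hz : ‖z‖ = t) (ht : t ≤ 2 * T) : z ∈ A \ ball 0 t := by
  refine ⟨hball ?_, ?_⟩
  · rw [mem_closedBall_zero_iff, hz]; exact ht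
  · rw [mem_ball_zero_iff, hz]; exact lt_irrefl t

variable (hN : 0 < N) {A : Set (EuclideanSpace ℝ (Fin N))} (hA : IsCompact A)
  {T : ℝ} (hball : closedBall 0 (2 * T) ⊆ A)

include hN hball

lemma As_nonempty' {t : ℝ} (ht0 : 0 ≤ t) (ht : t ≤ 2 * T) : (A \ ball 0 t).Nonempty := by
  obtain ⟨z, hz⟩ := exists_norm_eq' hN ht0
  exact ⟨z, mem_As' hball hz ht⟩

lemma infDist_mono' {s t : ℝ} (hs : 0 ≤ s) (hst : s ≤ t) (ht : t ≤ 2 * T)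
    (x : EuclideanSpace ℝ (Fin N)) :
    infDist x (A \ ball 0 s) ≤ infDist x (A \ ball 0 t) :=
  infDist_le_infDist_of_subset (diff_subset_diff_right (ball_subset_ball hst))
    (As_nonempty' hN hball (hs.trans hst) ht)

lemma infDist_le_rad' {t : ℝ} (ht : t ≤ 2 * T) {x : EuclideanSpace ℝ (Fin N)}
    (hx : ‖x‖ ≤ t) : infDist x (A \ ball 0 t) ≤ t := by
  obtain ⟨z, hz, hdz⟩ := radial' hN hx
  calc infDist x (A \ ball 0 t) ≤ dist x z := infDist_le_dist_of_mem (mem_As' hball hz ht)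
    _ = t - ‖x‖ := hdz
    _ ≤ t := by linarith [norm_nonneg x]

include hA

lemma infDist_le_add' {s t : ℝ} (hs : 0 ≤ s) (hst : s ≤ t) (ht : t ≤ 2 * T)
    (x : EuclideanSpace ℝ (Fin N)) :
    infDist x (A \ ball 0 t) ≤ infDist x (A \ ball 0 s) + (t - s) := by
  obtain ⟨y, hy, hdy⟩ := (hA.diff isOpen_ball).exists_infDist_eq_dist
    (As_nonempty' hN hball hs (hst.trans ht)) x
  rcases le_or_gt t ‖y‖ with h | h
  · have hyt : y ∈ A \ ball 0 t := ⟨hy.1, by rw [mem_ball_zero_iff]; exact not_lt.mpr h⟩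
    calc infDist x (A \ ball 0 t) ≤ dist x y := infDist_le_dist_of_mem hyt
      _ ≤ _ := by rw [← hdy]; linarith
  · obtain ⟨z, hz, hdz⟩ := radial' hN h.le
    have hsy : s ≤ ‖y‖ := by
      have h2 := hy.2; rw [mem_ball_zero_iff] at h2; exact not_lt.mp h2
    calc infDist x (A \ ball 0 t) ≤ dist x z := infDist_le_dist_of_mem (mem_As' hball hz ht)
      _ ≤ dist x y + dist y z := dist_triangle x y z
      _ ≤ infDist x (A \ ball 0 s) + (t - s) := by rw [hdz, ← hdy]; linarith

lemma infDist_le_outside' {s t : ℝ} (hs : 0 ≤ s) (hst : s ≤ t) (ht : t ≤ 2 * T)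
    {x : EuclideanSpace ℝ (Fin N)} (hx : t ≤ ‖x‖) :
    infDist x (A \ ball 0 t) ≤ infDist x (A \ ball 0 s) := by
  obtain ⟨y, hy, hdy⟩ := (hA.diff isOpen_ball).exists_infDist_eq_dist
    (As_nonempty' hN hball hs (hst.trans ht)) x
  rw [hdy]
  rcases le_or_gt t ‖y‖ with h | h
  · exact infDist_le_dist_of_mem ⟨hy.1, by rw [mem_ball_zero_iff]; exact not_lt.mpr h⟩
  · have hcont : ContinuousOn (fun θ : ℝ => ‖y + θ • (x - y)‖) (Icc 0 1) :=
      (continuous_norm.comp (continuous_const.add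
        (continuous_id.smul continuous_const))).continuousOn
    have hmem : t ∈ Icc ‖y + (0:ℝ) • (x - y)‖ ‖y + (1:ℝ) • (x - y)‖ := by
      simp only [zero_smul, add_zero, one_smul, add_sub_cancel]
      exact ⟨h.le, hx⟩
    obtain ⟨θ, hθ, hθt⟩ := intermediate_value_Icc zero_le_one hcont hmem
    have hz : ‖y + θ • (x - y)‖ = t := hθt
    have hxzeq : x - (y + θ • (x - y)) = (1 - θ) • (x - y) := by
      rw [sub_smul, one_smul]; abel
    have hxz : dist x (y + θ • (x - y)) ≤ dist x y := by
      rw [dist_eq_norm, dist_eq_norm, hxzeq, norm_smul, Real.norm_eq_abs,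
        abs_of_nonneg (by linarith [hθ.2])]
      nlinarith [norm_nonneg (x - y), hθ.1, hθ.2]
    exact le_trans (infDist_le_dist_of_mem (mem_As' hball hz ht)) hxz

lemma pointwise_bound' (hT : 0 ≤ T) {φ : ℝ → ℝ} {L : ℝ} (hL0 : 0 ≤ L)
    (hL : ∀ a ∈ Icc (0:ℝ) (2 * T), ∀ b ∈ Icc (0:ℝ) (2 * T), |φ a - φ b| ≤ L * |a - b|)
    {s r : ℝ} (hs : 0 ≤ s) (hr : 0 ≤ r) (hsr : s + r ≤ T) (x : EuclideanSpace ℝ (Fin N)) :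
    ‖φ (infDist x (A \ ball 0 (s + r))) - φ (infDist x (A \ ball 0 s))‖ ≤
      ‖(ball (0 : EuclideanSpace ℝ (Fin N)) (s + r)).indicator (fun _ => L * r) x‖ := by
  have hT2 : s + r ≤ 2 * T := by linarith
  by_cases hx : x ∈ ball (0 : EuclideanSpace ℝ (Fin N)) (s + r)
  · rw [indicator_of_mem hx]
    rw [mem_ball_zero_iff] at hx
    set u1 := infDist x (A \ ball 0 (s + r)) with hu1
    set u2 := infDist x (A \ ball 0 s) with hu2
    have h21 : u2 ≤ u1 := infDist_mono' hN hball hs (by linarith) hT2 x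
    have h1t : u1 ≤ s + r := infDist_le_rad' hN hball hT2 hx.le
    have h12 : u1 ≤ u2 + r := by
      have := infDist_le_add' hN hA hball hs (by linarith : s ≤ s + r) hT2 x
      rw [← hu1, ← hu2] at this; linarith
    have hu10 : 0 ≤ u1 := infDist_nonneg
    have hu20 : 0 ≤ u2 := infDist_nonneg
    have hb : |φ u1 - φ u2| ≤ L * r := by
      have h := hL u1 ⟨hu10, by linarith⟩ u2 ⟨hu20, by linarith⟩
      have habs : |u1 - u2| ≤ r := by rw [abs_of_nonneg (by linarith)]; linarith
      calc |φ u1 - φ u2| ≤ L * |u1 - u2| := h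
        _ ≤ L * r := by nlinarith
    rw [Real.norm_eq_abs, Real.norm_eq_abs, abs_of_nonneg (by positivity : (0:ℝ) ≤ L * r)]
    exact hb
  · rw [indicator_of_notMem hx]
    rw [mem_ball_zero_iff, not_lt] at hx
    have h1 : infDist x (A \ ball 0 (s + r)) = infDist x (A \ ball 0 s) :=
      le_antisymm (infDist_le_outside' hN hA hball hs (by linarith) hT2 hx)
        (infDist_mono' hN hball hs (by linarith) hT2 x)
    simp [h1]

lemma eLpNorm_bound' (hT : 0 ≤ T) {p : ℝ} (hp : 1 ≤ p) {φ : ℝ → ℝ} {L : ℝ} (hL0 : 0 ≤ L)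
    (hL : ∀ a ∈ Icc (0:ℝ) (2 * T), ∀ b ∈ Icc (0:ℝ) (2 * T), |φ a - φ b| ≤ L * |a - b|)
    {s r : ℝ} (hs : 0 ≤ s) (hr : 0 ≤ r) (hsr : s + r ≤ T) :
    eLpNorm (fun x => φ (infDist x (A \ ball 0 (s + r))) - φ (infDist x (A \ ball 0 s)))
        (ENNReal.ofReal p) volume ≤
      ENNReal.ofReal (L * r) *
        (volume (ball (0 : EuclideanSpace ℝ (Fin N)) (s + r))) ^ (1 / p) := by
  have h1 := eLpNorm_mono (g := (ball (0 : EuclideanSpace ℝ (Fin N)) (s + r)).indicator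
      (fun _ => L * r)) (p := ENNReal.ofReal p) (μ := volume)
    (pointwise_bound' hN hA hball hT hL0 hL hs hr hsr)
  refine h1.trans (le_of_eq ?_)
  rw [eLpNorm_indicator_const measurableSet_ball
      (by simp [ENNReal.ofReal_eq_zero]; linarith) ENNReal.ofReal_ne_top,
    ENNReal.toReal_ofReal (by linarith : (0:ℝ) ≤ p),
    Real.enorm_eq_ofReal (by positivity : (0:ℝ) ≤ L * r)]

end Aux

lemma toReal_le_aux {p : ℝ} (hp : 1 ≤ p) {X V : ℝ≥0∞} {a : ℝ} (ha : 0 ≤ a) (hV : V ≠ ⊤)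
    (h : X ≤ ENNReal.ofReal a * V ^ (1 / p)) :
    X.toReal ≤ a * V.toReal ^ (1 / p) := by
  have hB : ENNReal.ofReal a * V ^ (1 / p) ≠ ⊤ :=
    ENNReal.mul_ne_top ENNReal.ofReal_ne_top (ENNReal.rpow_ne_top_of_nonneg (by positivity) hV)
  have := ENNReal.toReal_mono hB h
  rwa [ENNReal.toReal_mul, ENNReal.toReal_ofReal ha, ← ENNReal.toReal_rpow] at this

lemma toReal_rpow_aux {p : ℝ} (hp : 1 ≤ p) {X V : ℝ≥0∞} {a : ℝ} (ha : 0 ≤ a) (hV : V ≠ ⊤)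
    (h : X ≤ ENNReal.ofReal a * V ^ (1 / p)) :
    X.toReal ^ p ≤ a ^ p * V.toReal := by
  have hp0 : (0:ℝ) < p := by linarith
  have h1 := toReal_le_aux hp ha hV h
  have h2 : X.toReal ^ p ≤ (a * V.toReal ^ (1 / p)) ^ p :=
    Real.rpow_le_rpow ENNReal.toReal_nonneg h1 (by linarith)
  refine h2.trans (le_of_eq ?_)
  rw [Real.mul_rpow ha (Real.rpow_nonneg ENNReal.toReal_nonneg _),
    ← Real.rpow_mul ENNReal.toReal_nonneg, one_div, inv_mul_cancel₀ hp0.ne', Real.rpow_one]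

lemma zero_dim_infDist {A : Set (EuclideanSpace ℝ (Fin 0))} (h0 : (0 : EuclideanSpace ℝ (Fin 0)) ∈ A)
    {u : ℝ} (hu : 0 ≤ u) (x : EuclideanSpace ℝ (Fin 0)) :
    infDist x (A \ ball 0 u) = 0 := by
  have hx : x = 0 := by ext i; exact i.elim0
  rcases eq_or_lt_of_le hu with h | h
  · have : ball (0 : EuclideanSpace ℝ (Fin 0)) u = ∅ := by
      rw [← h]; exact ball_zero
    rw [this, diff_empty, hx]
    exact infDist_zero_of_mem h0
  · have : A \ ball (0 : EuclideanSpace ℝ (Fin 0)) u = ∅ := by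
      apply eq_empty_of_subset_empty
      intro y hy
      exfalso
      apply hy.2
      have hy0 : y = 0 := by ext i; exact i.elim0
      rw [mem_ball_zero_iff, hy0, norm_zero]
      exact h
    rw [this, infDist_empty]

/-- Removal motion: for a nonempty compact `A ⊆ ℝ^N` with `0` in its interior, the
path `t ↦ A \ B_t` is Lipschitz for `d(X,Y) = ‖φ∘u_X − φ∘u_Y‖_{L^p}` on a small
interval `[0,T]`; indeed, with `L` a Lipschitz constant of `φ` near `0`,
`‖v_{A\B_{s+r}} − v_{A\B_s}‖_{L^p}^p ≤ ω_N r^p L^p (r+s)^N`. -/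
theorem stmt_19 {N : ℕ} (p : ℝ) (hp : 1 ≤ p) (φ : ℝ → ℝ)
    (hφpos : ∀ t : ℝ, 0 ≤ t → 0 < φ t) (hφC1 : ContDiff ℝ 1 φ)
    (hφanti : StrictAntiOn φ (Ici 0))
    (hφLp : MemLp (fun x : EuclideanSpace ℝ (Fin N) => φ ‖x‖) (ENNReal.ofReal p) volume)
    (A : Set (EuclideanSpace ℝ (Fin N))) (hA : IsCompact A) (hAne : A.Nonempty)
    (h0 : (0 : EuclideanSpace ℝ (Fin N)) ∈ interior A) :
    ∃ T : ℝ, 0 < T ∧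
      (∃ C : ℝ, 0 ≤ C ∧ ∀ s ∈ Icc (0:ℝ) T, ∀ t ∈ Icc (0:ℝ) T,
        (eLpNorm (fun x => φ (infDist x (A \ ball 0 s)) - φ (infDist x (A \ ball 0 t)))
          (ENNReal.ofReal p) volume).toReal ≤ C * |s - t|) ∧
      ∀ L : ℝ, 0 ≤ L → (∀ t₁ ∈ Icc (0:ℝ) (2 * T), ∀ t₂ ∈ Icc (0:ℝ) (2 * T),
          |φ t₁ - φ t₂| ≤ L * |t₁ - t₂|) →
        ∀ s r : ℝ, 0 ≤ s → 0 ≤ r → s + r ≤ T →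
          (eLpNorm (fun x => φ (infDist x (A \ ball 0 (s + r)))
              - φ (infDist x (A \ ball 0 s))) (ENNReal.ofReal p) volume).toReal ^ p
            ≤ (volume (ball (0 : EuclideanSpace ℝ (Fin N)) 1)).toReal
              * r ^ p * L ^ p * (r + s) ^ N := by
  have hp0 : (0:ℝ) < p := by linarith
  rcases Nat.eq_zero_or_pos N with rfl | hN
  · -- trivial 0-dimensional case
    have h0A : (0 : EuclideanSpace ℝ (Fin 0)) ∈ A := interior_subset h0
    refine ⟨1, one_pos, ⟨0, le_refl 0, ?_⟩, ?_⟩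
    · intro s hs t ht
      have hfz : (fun x : EuclideanSpace ℝ (Fin 0) =>
          φ (infDist x (A \ ball 0 s)) - φ (infDist x (A \ ball 0 t))) = fun _ => 0 := by
        funext x
        rw [zero_dim_infDist h0A hs.1 x, zero_dim_infDist h0A ht.1 x, sub_self]
      rw [hfz]
      simp [eLpNorm_zero']
    · intro L hL0 hL s r hs hr hsr
      have hfz : (fun x : EuclideanSpace ℝ (Fin 0) =>
          φ (infDist x (A \ ball 0 (s + r))) - φ (infDist x (A \ ball 0 s))) = fun _ => 0 := by
        funext x
        rw [zero_dim_infDist h0A (by linarith : (0:ℝ) ≤ s + r) x,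
          zero_dim_infDist h0A hs x, sub_self]
      rw [hfz]
      have : eLpNorm (fun _ : EuclideanSpace ℝ (Fin 0) => (0:ℝ)) (ENNReal.ofReal p) volume = 0 :=
        eLpNorm_zero'
      rw [this, ENNReal.toReal_zero, Real.zero_rpow hp0.ne']
      have h1 : (0:ℝ) ≤ r ^ p := Real.rpow_nonneg hr p
      have h2 : (0:ℝ) ≤ L ^ p := Real.rpow_nonneg hL0 p
      have h3 : (0:ℝ) ≤ (r + s) ^ (0:ℕ) := pow_nonneg (by linarith) 0
      have h4 : (0:ℝ) ≤ (volume (ball (0 : EuclideanSpace ℝ (Fin 0)) 1)).toReal :=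
        ENNReal.toReal_nonneg
      positivity
  · -- main case
    obtain ⟨ε, hε, hballε⟩ : ∃ ε > 0, ball (0 : EuclideanSpace ℝ (Fin N)) ε ⊆ A :=
      Metric.mem_nhds_iff.mp (mem_interior_iff_mem_nhds.mp h0)
    set T : ℝ := ε / 4 with hT
    have hT0 : 0 < T := by positivity
    have hball : closedBall (0 : EuclideanSpace ℝ (Fin N)) (2 * T) ⊆ A := by
      refine (closedBall_subset_ball ?_).trans hballε
      rw [hT]; linarith
    -- volume of balls is finite
    have hVfin : ∀ u : ℝ, volume (ball (0 : EuclideanSpace ℝ (Fin N)) u) ≠ ⊤ :=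
      fun u => measure_ball_lt_top.ne
    -- Lipschitz constant for φ on Icc 0 (2T)
    obtain ⟨K₀, hK₀⟩ := (isCompact_Icc (a := (0:ℝ)) (b := 2 * T)).exists_bound_of_continuousOn
      ((hφC1.continuous_deriv le_rfl).continuousOn)
    set K : ℝ := max K₀ 0 with hK
    have hK0 : 0 ≤ K := le_max_right _ _
    have hKlip : ∀ a ∈ Icc (0:ℝ) (2 * T), ∀ b ∈ Icc (0:ℝ) (2 * T),
        |φ a - φ b| ≤ K * |a - b| := by
      intro a ha b hb
      have := Convex.norm_image_sub_le_of_norm_deriv_le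
        (f := φ) (s := Icc (0:ℝ) (2 * T)) (C := K)
        (fun x _ => (hφC1.differentiable one_ne_zero).differentiableAt)
        (fun x hx => (hK₀ x hx).trans (le_max_left _ _)) (convex_Icc _ _) hb ha
      simpa [Real.norm_eq_abs] using this
    refine ⟨T, hT0, ⟨K * (volume (ball (0 : EuclideanSpace ℝ (Fin N)) T)).toReal ^ (1 / p),
        by positivity, ?_⟩, ?_⟩
    · -- Lipschitz part
      have key : ∀ s t : ℝ, 0 ≤ s → s ≤ t → t ≤ T →
          (eLpNorm (fun x => φ (infDist x (A \ ball 0 t)) - φ (infDist x (A \ ball 0 s)))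
            (ENNReal.ofReal p) volume).toReal ≤
          K * (volume (ball (0 : EuclideanSpace ℝ (Fin N)) T)).toReal ^ (1 / p) * (t - s) := by
        intro s t hs hst htT
        have hsr : s + (t - s) ≤ T := by linarith
        have hb := eLpNorm_bound' hN hA hball hT0.le hp hK0 hKlip hs (by linarith) hsr
        rw [show s + (t - s) = t by ring] at hb
        have hb2 : eLpNorm (fun x => φ (infDist x (A \ ball 0 t)) -
            φ (infDist x (A \ ball 0 s))) (ENNReal.ofReal p) volume ≤
            ENNReal.ofReal (K * (t - s)) *
              (volume (ball (0 : EuclideanSpace ℝ (Fin N)) T)) ^ (1 / p) := by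
          refine hb.trans ?_
          gcongr
        have h3 := toReal_le_aux hp (mul_nonneg hK0 (by linarith : (0:ℝ) ≤ t - s)) (hVfin T) hb2
        calc _ ≤ K * (t - s) * (volume (ball (0 : EuclideanSpace ℝ (Fin N)) T)).toReal ^ (1 / p) :=
              h3
          _ = K * (volume (ball (0 : EuclideanSpace ℝ (Fin N)) T)).toReal ^ (1 / p) * (t - s) := by
              ring
      intro s hs t ht
      rcases le_total s t with h | h
      · have hneg : (fun x => φ (infDist x (A \ ball 0 s)) - φ (infDist x (A \ ball 0 t)))
            = -(fun x => φ (infDist x (A \ ball 0 t)) - φ (infDist x (A \ ball 0 s))) := by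
          funext x; simp
        rw [hneg, eLpNorm_neg, abs_sub_comm, abs_of_nonneg (by linarith)]
        exact key s t hs.1 h ht.2
      · rw [abs_of_nonneg (by linarith)]
        exact key t s ht.1 h hs.2
    · -- power bound part
      intro L hL0 hL s r hs hr hsr
      have hb := eLpNorm_bound' hN hA hball hT0.le hp hL0 hL hs hr hsr
      have hmain := toReal_rpow_aux hp (by positivity : (0:ℝ) ≤ L * r) (hVfin (s + r)) hb
      refine hmain.trans (le_of_eq ?_)
      haveI : Nontrivial (EuclideanSpace ℝ (Fin N)) := by
        obtain ⟨z, hz⟩ := exists_norm_eq' hN (zero_le_one (α := ℝ))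
        exact ⟨z, 0, by intro h; rw [h, norm_zero] at hz; norm_num at hz⟩
      rw [Measure.addHaar_ball (volume : Measure (EuclideanSpace ℝ (Fin N))) 0 (by linarith : (0:ℝ) ≤ s + r),
        ENNReal.toReal_mul, ENNReal.toReal_ofReal (by positivity),
        finrank_euclideanSpace_fin, Real.mul_rpow hL0 hr, show s + r = r + s by ring]
      generalize L ^ p = a
      generalize r ^ p = b
      ring
end
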